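/- arXiv:1509.02121 — 3 statements merged into one kernel-verified Lean document; each statement's English description precedes it below -/
import Mathlib

section
/- Let n ≥ 2, let x0 ∈ ℝⁿ, and let Q : ℝⁿ → [0, ∞) be integrable on some ball B(x0, r0) and have finite mean oscillation at x0. Then for every ε0 ∈ (0, min(r0, 1/e)) one has, as ε → 0⁺, ∫_{ε < |x−x0| < ε0} Q(x) / (|x−x0| · log(1/|x−x0|))ⁿ dx = O(log log(1/ε)); that is, there exist C > 0 and ε1 ∈ (0, ε0) such that ∫_{ε < |x−x0| < ε0} Q(x) / (|x−x0| · log(1/|x−x0|))ⁿ dx ≤ C · log log(1/ε) for all ε ∈ (0, ε1). -/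
open MeasureTheory Metric Filter Topology

set_option maxHeartbeats 1000000 in
lemma FMOaux_avg_sub_const {α : Type*} [MeasurableSpace α] (μ : Measure α) (Q : α → ℝ) (c : ℝ)
    (s : Set α) (hμs : μ s ≠ 0) (hμt : μ s ≠ ⊤) (hint : IntegrableOn Q s μ) :
    ⨍ x in s, (Q x - c) ∂μ = (⨍ x in s, Q x ∂μ) - c := by
  rw [setAverage_eq, setAverage_eq, integral_sub hint (integrableOn_const hμt),
    integral_const, smul_sub, measureReal_restrict_apply_univ, smul_smul, smul_eq_mul, smul_eq_mul,
    inv_mul_cancel₀ (by simp [measureReal_def, ENNReal.toReal_ne_zero, hμs, hμt]), one_mul]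

lemma FMOaux_abs_avg_le {α : Type*} [MeasurableSpace α] (μ : Measure α) (Q : α → ℝ) (s : Set α) :
    |⨍ x in s, Q x ∂μ| ≤ ⨍ x in s, |Q x| ∂μ := by
  rw [setAverage_eq, setAverage_eq, smul_eq_mul, smul_eq_mul, abs_mul,
    abs_of_nonneg (show (0:ℝ) ≤ (μ.real s)⁻¹ by positivity)]
  refine mul_le_mul_of_nonneg_left ?_ (by positivity)
  simpa using norm_integral_le_integral_norm (μ := μ.restrict s) Q

lemma FMOaux_avg_nonneg {α : Type*} [MeasurableSpace α] (μ : Measure α) {Q : α → ℝ}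
    (hQ0 : ∀ x, 0 ≤ Q x) (s : Set α) : 0 ≤ ⨍ x in s, Q x ∂μ := by
  rw [setAverage_eq]
  exact smul_nonneg (by positivity) (integral_nonneg hQ0)

lemma FMOaux_ball_vol (n : ℕ) (x0 : EuclideanSpace ℝ (Fin n)) {r : ℝ} (hr : 0 < r) :
    (volume (ball x0 r)).toReal
      = r ^ n * (volume (ball (0 : EuclideanSpace ℝ (Fin n)) 1)).toReal := by
  rw [Measure.addHaar_ball_of_pos volume x0 hr, finrank_euclideanSpace_fin,
    ENNReal.toReal_mul, ENNReal.toReal_ofReal (by positivity)]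

lemma FMOaux_ball_vol_pos (n : ℕ) (hn : 2 ≤ n) (x0 : EuclideanSpace ℝ (Fin n)) {r : ℝ}
    (hr : 0 < r) : 0 < (volume (ball x0 r)).toReal := by
  haveI : Nonempty (Fin n) := Fin.pos_iff_nonempty.mp (by omega)
  exact ENNReal.toReal_pos (measure_ball_pos volume x0 hr).ne' measure_ball_lt_top.ne

set_option maxHeartbeats 1000000 in
lemma FMOaux_halving (n : ℕ) (hn : 2 ≤ n) (x0 : EuclideanSpace ℝ (Fin n))
    (Q : EuclideanSpace ℝ (Fin n) → ℝ) {r : ℝ} (hr : 0 < r)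
    (hint : IntegrableOn Q (ball x0 (2*r))) :
    ⨍ x in ball x0 r, Q x ≤ (⨍ x in ball x0 (2*r), Q x)
      + 2^n * ⨍ x in ball x0 (2*r), |Q x - ⨍ y in ball x0 (2*r), Q y| := by
  set c := ⨍ x in ball x0 (2*r), Q x with hc
  have h2r : (0:ℝ) < 2*r := by linarith
  have hsub : ball x0 r ⊆ ball x0 (2*r) := ball_subset_ball (by linarith)
  have hμr0 : volume (ball x0 r) ≠ 0 := by
    haveI : Nonempty (Fin n) := Fin.pos_iff_nonempty.mp (by omega)
    exact (measure_ball_pos volume x0 hr).ne'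
  have hμrt : volume (ball x0 r) ≠ ⊤ := measure_ball_lt_top.ne
  have hintr : IntegrableOn Q (ball x0 r) := hint.mono_set hsub
  have habs : IntegrableOn (fun x => |Q x - c|) (ball x0 (2*r)) :=
    (hint.sub (integrableOn_const measure_ball_lt_top.ne)).abs
  have step1 : (⨍ x in ball x0 r, Q x) - c ≤ ⨍ x in ball x0 r, |Q x - c| := by
    rw [← FMOaux_avg_sub_const volume Q c _ hμr0 hμrt hintr]
    exact le_trans (le_abs_self _) (FMOaux_abs_avg_le volume _ _)
  have step2 : ⨍ x in ball x0 r, |Q x - c|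
      ≤ (volume (ball x0 r)).toReal⁻¹ * ∫ x in ball x0 (2*r), |Q x - c| := by
    rw [setAverage_eq, smul_eq_mul]
    refine mul_le_mul_of_nonneg_left ?_ (by positivity)
    exact setIntegral_mono_set habs (Eventually.of_forall (fun x => abs_nonneg _))
      (HasSubset.Subset.eventuallyLE hsub)
  have step3 : (volume (ball x0 r)).toReal⁻¹ * ∫ x in ball x0 (2*r), |Q x - c|
      = 2^n * ⨍ x in ball x0 (2*r), |Q x - c| := by
    rw [setAverage_eq, smul_eq_mul, ← mul_assoc]
    congr 1
    rw [FMOaux_ball_vol n x0 hr, measureReal_def, FMOaux_ball_vol n x0 h2r, mul_pow]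
    have hω : 0 < (volume (ball (0 : EuclideanSpace ℝ (Fin n)) 1)).toReal :=
      FMOaux_ball_vol_pos n hn 0 one_pos
    field_simp
  linarith [step1, step2.trans_eq step3]

lemma FMOaux_iter (n : ℕ) (hn : 2 ≤ n) (x0 : EuclideanSpace ℝ (Fin n))
    (Q : EuclideanSpace ℝ (Fin n) → ℝ) {a M : ℝ} (ha : 0 < a)
    (hint : IntegrableOn Q (ball x0 a))
    (hosc : ∀ r, 0 < r → r ≤ a →
      ⨍ x in ball x0 r, |Q x - ⨍ y in ball x0 r, Q y| ≤ M) :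
    ∀ k : ℕ, ⨍ x in ball x0 (a/2^k), Q x ≤ (⨍ x in ball x0 a, Q x) + 2^n * M * k := by
  intro k
  induction k with
  | zero => simp
  | succ k ih =>
    have hrk : (0:ℝ) < a / 2^(k+1) := by positivity
    have h2 : 2 * (a / 2^(k+1)) = a / 2^k := by ring
    have h1 : (1:ℝ) ≤ 2^k := by exact_mod_cast Nat.one_le_two_pow
    have hle : a / 2^k ≤ a := div_le_self ha.le h1
    have hint' : IntegrableOn Q (ball x0 (2 * (a / 2^(k+1)))) := by
      rw [h2]; exact hint.mono_set (ball_subset_ball hle)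
    have key := FMOaux_halving n hn x0 Q hrk hint'
    rw [h2] at key
    have hoscle := hosc (a / 2^k) (by positivity) hle
    push_cast
    have h2n : (0:ℝ) ≤ 2^n := by positivity
    nlinarith [key, ih, hoscle]

lemma FMOaux_ball_int (n : ℕ) (x0 : EuclideanSpace ℝ (Fin n))
    (Q : EuclideanSpace ℝ (Fin n) → ℝ) {r X : ℝ} (hr : 0 < r)
    (havg : ⨍ x in ball x0 r, Q x ≤ X) :
    ∫ x in ball x0 r, Q x
      ≤ r^n * (volume (ball (0 : EuclideanSpace ℝ (Fin n)) 1)).toReal * X := by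
  rw [← measure_smul_setAverage (μ := volume) Q (s := ball x0 r) measure_ball_lt_top.ne,
    measureReal_def, Measure.addHaar_ball_of_pos volume x0 hr, finrank_euclideanSpace_fin,
    ENNReal.toReal_mul, ENNReal.toReal_ofReal (by positivity), smul_eq_mul]
  exact mul_le_mul_of_nonneg_left havg (by positivity)

lemma FMOaux_pointwise (n : ℕ) {d lo li : ℝ} (hlo : 0 < lo) (hli : 0 < li)
    (hd : lo ≤ d) (hl : li ≤ Real.log (1 / d)) {Qx : ℝ} (hQx : 0 ≤ Qx) :
    Qx / (d * Real.log (1 / d)) ^ n ≤ (1 / (lo * li)) ^ n * Qx := by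
  have hd0 : 0 < d := lt_of_lt_of_le hlo hd
  have hb : lo * li ≤ d * Real.log (1 / d) := mul_le_mul hd hl hli.le hd0.le
  have hbpos : (0:ℝ) < lo * li := by positivity
  have hpow : (lo * li) ^ n ≤ (d * Real.log (1 / d)) ^ n := pow_le_pow_left₀ hbpos.le hb n
  rw [div_le_iff₀ (lt_of_lt_of_le (by positivity) hpow)]
  calc Qx = Qx * 1 := (mul_one _).symm
    _ ≤ (1 / (lo * li)) ^ n * Qx * (lo * li) ^ n := by
        rw [mul_comm _ Qx, mul_assoc]
        refine mul_le_mul_of_nonneg_left ?_ hQx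
        rw [← mul_pow, one_div, inv_mul_cancel₀ hbpos.ne', one_pow]
    _ ≤ (1 / (lo * li)) ^ n * Qx * (d * Real.log (1 / d)) ^ n :=
        mul_le_mul_of_nonneg_left hpow (by positivity)

lemma FMOaux_log_ge_one {d b : ℝ} (hd : 0 < d) (hdb : d ≤ b) (hb : b ≤ 1 / Real.exp 1) :
    1 ≤ Real.log (1 / d) := by
  rw [one_div, Real.log_inv, le_neg]
  calc Real.log d ≤ Real.log (1 / Real.exp 1) := Real.log_le_log hd (hdb.trans hb)
    _ = -1 := by rw [one_div, Real.log_inv, Real.log_exp]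

lemma FMOaux_loglb {a d : ℝ} (k : ℕ) (ha : 0 < a) (ha1 : a ≤ 1 / Real.exp 1)
    (hd0 : 0 < d) (hd2 : d < a / 2^k) :
    (k : ℝ) * Real.log 2 + 1 ≤ Real.log (1 / d) := by
  have hloga : 1 ≤ Real.log (1/a) := FMOaux_log_ge_one ha le_rfl ha1
  have h1 : Real.log (2^k / a) ≤ Real.log (1/d) := by
    apply Real.log_le_log (by positivity)
    rw [div_le_div_iff₀ (by positivity) hd0, one_mul]
    nlinarith [mul_le_mul_of_nonneg_left hd2.le (show (0:ℝ) ≤ 2^k by positivity),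
      mul_div_cancel₀ a (show (2:ℝ)^k ≠ 0 by positivity)]
  refine le_trans ?_ h1
  rw [Real.log_div (by positivity) ha.ne', Real.log_pow]
  have h2 : Real.log (1/a) = - Real.log a := by rw [one_div, Real.log_inv]
  linarith

set_option maxHeartbeats 1000000 in
lemma FMOaux_int (n : ℕ) (x0 : EuclideanSpace ℝ (Fin n))
    (Q : EuclideanSpace ℝ (Fin n) → ℝ) (hQ0 : ∀ x, 0 ≤ Q x)
    {r0 ε0 c : ℝ} (hQint : IntegrableOn Q (ball x0 r0))
    (hε0r : ε0 < r0) (hε0e : ε0 ≤ 1 / Real.exp 1) (hc : 0 < c) :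
    IntegrableOn (fun x => Q x / (dist x x0 * Real.log (1 / dist x x0)) ^ n)
      {x | dist x x0 ∈ Set.Ico c ε0} := by
  set T := {x | dist x x0 ∈ Set.Ico c ε0} with hT
  have hdistm : Measurable fun x : EuclideanSpace ℝ (Fin n) => dist x x0 :=
    (continuous_id.dist continuous_const).measurable
  have hTmeas : MeasurableSet T := hdistm measurableSet_Ico
  have hTsub : T ⊆ ball x0 r0 := fun x hx => mem_ball.mpr (lt_trans hx.2 hε0r)
  have hQm : AEStronglyMeasurable Q (volume.restrict T) :=
    hQint.aestronglyMeasurable.mono_measure (Measure.restrict_mono hTsub le_rfl)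
  have hwm : Measurable fun x : EuclideanSpace ℝ (Fin n) =>
      (dist x x0 * Real.log (1 / dist x x0)) ^ n :=
    ((hdistm.mul (Real.measurable_log.comp (measurable_const.div hdistm))).pow_const n)
  have hfm : AEStronglyMeasurable
      (fun x => Q x / (dist x x0 * Real.log (1 / dist x x0)) ^ n) (volume.restrict T) := by
    simp only [div_eq_mul_inv]
    exact hQm.mul hwm.inv.aestronglyMeasurable
  have hgint : Integrable (fun x => (1 / (c * 1)) ^ n * Q x) (volume.restrict T) :=
    (hQint.mono_set hTsub).const_mul _
  refine hgint.mono' hfm ?_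
  rw [ae_restrict_iff' hTmeas]
  refine Eventually.of_forall fun x hx => ?_
  have hd0 : 0 < dist x x0 := lt_of_lt_of_le hc hx.1
  have hl1 : 1 ≤ Real.log (1 / dist x x0) := FMOaux_log_ge_one hd0 hx.2.le hε0e
  rw [Real.norm_eq_abs, abs_of_nonneg (div_nonneg (hQ0 x)
    (pow_nonneg (mul_nonneg hd0.le (by linarith)) n))]
  exact FMOaux_pointwise n hc one_pos hx.1 hl1 (hQ0 x)

set_option maxHeartbeats 1000000 in
lemma FMOaux_annulus (n : ℕ) (hn : 2 ≤ n) (x0 : EuclideanSpace ℝ (Fin n))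
    (Q : EuclideanSpace ℝ (Fin n) → ℝ) (hQ0 : ∀ x, 0 ≤ Q x)
    {r0 ε0 a M : ℝ} (hQint : IntegrableOn Q (ball x0 r0))
    (hε0r : ε0 < r0) (hε0e : ε0 ≤ 1 / Real.exp 1)
    (ha : 0 < a) (haε0 : a ≤ ε0) (hM0 : 0 ≤ M)
    (hosc : ∀ r, 0 < r → r ≤ a →
      ⨍ x in ball x0 r, |Q x - ⨍ y in ball x0 r, Q y| ≤ M) :
    ∃ C2 : ℝ, 0 ≤ C2 ∧ ∀ k : ℕ,
      ∫ x in {x | dist x x0 ∈ Set.Ico (a/2^(k+1)) (a/2^k)},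
          Q x / (dist x x0 * Real.log (1 / dist x x0)) ^ n
        ≤ C2 * (1/(k+1)) := by
  set ω := (volume (ball (0 : EuclideanSpace ℝ (Fin n)) 1)).toReal with hω
  have hω0 : 0 ≤ ω := ENNReal.toReal_nonneg
  set Abar := ⨍ x in ball x0 a, Q x with hAbar
  have hA0 : 0 ≤ Abar := FMOaux_avg_nonneg volume hQ0 _
  have har0 : a < r0 := lt_of_le_of_lt haε0 hε0r
  have hinta : IntegrableOn Q (ball x0 a) := hQint.mono_set (ball_subset_ball har0.le)
  refine ⟨4 * ω * 2^n * (Abar + 2^n * M), by positivity, fun k => ?_⟩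
  set lo := a / 2^(k+1) with hlo
  set li := (k : ℝ) * Real.log 2 + 1 with hli
  have hlog2 : (0:ℝ) < Real.log 2 := Real.log_pos (by norm_num)
  have hlo0 : 0 < lo := by positivity
  have hli0 : (0:ℝ) < li := by positivity
  have h2k1 : (1:ℝ) ≤ 2^k := by exact_mod_cast Nat.one_le_two_pow
  have hak : a / 2^k ≤ a := div_le_self ha.le h2k1
  set S := {x | dist x x0 ∈ Set.Ico (a/2^(k+1)) (a/2^k)} with hS
  have hdistm : Measurable fun x : EuclideanSpace ℝ (Fin n) => dist x x0 :=
    (continuous_id.dist continuous_const).measurable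
  have hSmeas : MeasurableSet S := hdistm measurableSet_Ico
  have hSsub1 : S ⊆ {x | dist x x0 ∈ Set.Ico lo ε0} :=
    fun x hx => ⟨hx.1, lt_of_lt_of_le hx.2 (hak.trans haε0)⟩
  have hSball : S ⊆ ball x0 (a/2^k) := fun x hx => mem_ball.mpr hx.2
  have hSsubr0 : S ⊆ ball x0 r0 := fun x hx =>
    mem_ball.mpr (lt_of_lt_of_le hx.2 (hak.trans har0.le))
  have hintf : IntegrableOn
      (fun x => Q x / (dist x x0 * Real.log (1 / dist x x0)) ^ n) S :=
    (FMOaux_int n x0 Q hQ0 hQint hε0r hε0e hlo0).mono_set hSsub1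
  have hintg : IntegrableOn (fun x => (1/(lo*li))^n * Q x) S :=
    (hQint.mono_set hSsubr0).const_mul _
  have step1 : ∫ x in S, Q x / (dist x x0 * Real.log (1 / dist x x0)) ^ n
      ≤ ∫ x in S, (1/(lo*li))^n * Q x := by
    refine setIntegral_mono_on hintf hintg hSmeas fun x hx => ?_
    have hd0 : 0 < dist x x0 := lt_of_lt_of_le hlo0 hx.1
    exact FMOaux_pointwise n hlo0 hli0 hx.1
      (FMOaux_loglb k ha (haε0.trans hε0e) hd0 hx.2) (hQ0 x)
  have step2 : ∫ x in S, (1/(lo*li))^n * Q x = (1/(lo*li))^n * ∫ x in S, Q x :=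
    integral_const_mul _ _
  have step3 : ∫ x in S, Q x ≤ ∫ x in ball x0 (a/2^k), Q x :=
    setIntegral_mono_set (hinta.mono_set (ball_subset_ball hak))
      (Eventually.of_forall fun x => hQ0 x) (HasSubset.Subset.eventuallyLE hSball)
  have step4 : ∫ x in ball x0 (a/2^k), Q x ≤ (a/2^k)^n * ω * (Abar + 2^n * M * k) :=
    FMOaux_ball_int n x0 Q (by positivity) (FMOaux_iter n hn x0 Q ha hinta hosc k)
  set X := Abar + 2^n * M * (k:ℝ) with hX
  have hX0 : (0:ℝ) ≤ X := by rw [hX]; positivity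
  have chain : ∫ x in S, Q x / (dist x x0 * Real.log (1 / dist x x0)) ^ n
      ≤ (1/(lo*li))^n * ((a/2^k)^n * ω * X) := by
    refine (step1.trans_eq step2).trans ?_
    refine mul_le_mul_of_nonneg_left (step3.trans step4) (by positivity)
  refine chain.trans ?_
  -- algebra
  have hcomb : (1/(lo*li))^n * ((a/2^k)^n * ω * X)
      = (2/li)^n * (ω * X) := by
    have hinner : (1/(lo*li)) * (a/2^k) = 2/li := by
      rw [hlo]; field_simp; ring
    calc (1/(lo*li))^n * ((a/2^k)^n * ω * X)
        = ((1/(lo*li)) * (a/2^k))^n * (ω * X) := by rw [mul_pow]; ring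
      _ = (2/li)^n * (ω * X) := by rw [hinner]
  rw [hcomb]
  set p := (k:ℝ) + 1 with hp
  have hp0 : (0:ℝ) < p := by positivity
  have hli1 : 1 ≤ li := by nlinarith [mul_nonneg (Nat.cast_nonneg k : (0:ℝ) ≤ k) hlog2.le]
  have hlip : p / 2 ≤ li := by nlinarith [Real.log_two_gt_d9, (Nat.cast_nonneg k : (0:ℝ) ≤ k)]
  have hlin : (p/2)^2 ≤ li^n := by
    calc (p/2)^2 ≤ li^2 := by nlinarith
      _ ≤ li^n := pow_le_pow_right₀ hli1 hn
  have h2n0 : (0:ℝ) < 2^n := by positivity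
  have hlin' : p^2 ≤ 4 * li^n := by nlinarith [hlin]
  have hfrac : (2/li)^n ≤ 4 * 2^n / p^2 := by
    rw [div_pow, div_le_div_iff₀ (by positivity) (by positivity)]
    calc 2^n * p^2 ≤ 2^n * (4 * li^n) := by
          exact mul_le_mul_of_nonneg_left hlin' h2n0.le
      _ = 4 * 2^n * li^n := by ring
  have hXp : X ≤ (Abar + 2^n * M) * p := by rw [hX, hp]; nlinarith
  have hfin : (2/li)^n * (ω * X) ≤ (4 * 2^n / p^2) * (ω * X) :=
    mul_le_mul_of_nonneg_right hfrac (by positivity)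
  refine hfin.trans ?_
  rw [div_mul_eq_mul_div, mul_one_div, div_le_div_iff₀ (by positivity) (by positivity)]
  nlinarith [mul_le_mul_of_nonneg_right
    (mul_le_mul_of_nonneg_left hXp (mul_nonneg hω0 h2n0.le)) hp0.le]

set_option maxHeartbeats 2000000 in
/-- If `Q ≥ 0` is integrable on a ball `B(x0, r0)` in `ℝⁿ`, `n ≥ 2`, and has
finite mean oscillation at `x0` (i.e. the means of `|Q - Q̄_ε|` over `B(x0, ε)` are eventually
bounded as `ε → 0⁺`), then for every `ε0 ∈ (0, min(r0, 1/e))` the integral of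
`Q(x)/(|x - x0|·log(1/|x - x0|))ⁿ` over the annulus `ε < |x - x0| < ε0` is
`O(log log (1/ε))` as `ε → 0⁺`. -/
theorem fmo_loglog_estimate (n : ℕ) (hn : 2 ≤ n) (x0 : EuclideanSpace ℝ (Fin n))
    (Q : EuclideanSpace ℝ (Fin n) → ℝ) (hQ0 : ∀ x, 0 ≤ Q x)
    (r0 : ℝ) (hr0 : 0 < r0) (hQint : IntegrableOn Q (ball x0 r0))
    (hFMO : ∃ M : ℝ, ∀ᶠ ε in 𝓝[>] (0 : ℝ),
      ⨍ x in ball x0 ε, |Q x - ⨍ y in ball x0 ε, Q y| ≤ M)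
    (ε0 : ℝ) (hε0 : ε0 ∈ Set.Ioo 0 (min r0 (1 / Real.exp 1))) :
    ∃ C > 0, ∃ ε1 ∈ Set.Ioo 0 ε0, ∀ ε ∈ Set.Ioo 0 ε1,
      ∫ x in {x | dist x x0 ∈ Set.Ioo ε ε0},
          Q x / (dist x x0 * Real.log (1 / dist x x0)) ^ n
        ≤ C * Real.log (Real.log (1 / ε)) := by
  obtain ⟨M, hM⟩ := hFMO
  obtain ⟨hε0pos, hε0lt⟩ := hε0
  have hε0r : ε0 < r0 := lt_of_lt_of_le hε0lt (min_le_left _ _)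
  have hε0e : ε0 < 1 / Real.exp 1 := lt_of_lt_of_le hε0lt (min_le_right _ _)
  obtain ⟨δ, hδ0, hδ⟩ : ∃ δ, δ ∈ Set.Ioi (0:ℝ) ∧ ∀ r, 0 < r → r < δ →
      ⨍ x in ball x0 r, |Q x - ⨍ y in ball x0 r, Q y| ≤ M := by
    obtain ⟨u, hu, hsub⟩ := mem_nhdsGT_iff_exists_Ioo_subset.mp hM
    exact ⟨u, hu, fun r h1 h2 => hsub ⟨h1, h2⟩⟩
  rw [Set.mem_Ioi] at hδ0
  set a := min (δ/2) ε0 with ha_def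
  have ha0 : 0 < a := lt_min (by linarith) hε0pos
  have haε0 : a ≤ ε0 := min_le_right _ _
  have hosc : ∀ r, 0 < r → r ≤ a →
      ⨍ x in ball x0 r, |Q x - ⨍ y in ball x0 r, Q y| ≤ M := fun r h1 h2 =>
    hδ r h1 (lt_of_le_of_lt (h2.trans (min_le_left _ _)) (by linarith))
  have hM0 : 0 ≤ M :=
    le_trans (FMOaux_avg_nonneg volume (fun x => abs_nonneg _) _) (hosc a ha0 le_rfl)
  obtain ⟨C2, hC20, hann⟩ :=
    FMOaux_annulus n hn x0 Q hQ0 hQint hε0r hε0e.le ha0 haε0 hM0 hosc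
  set f := fun x : EuclideanSpace ℝ (Fin n) =>
    Q x / (dist x x0 * Real.log (1 / dist x x0)) ^ n with hf
  have hdistm : Measurable fun x : EuclideanSpace ℝ (Fin n) => dist x x0 :=
    (continuous_id.dist continuous_const).measurable
  set Outer := {x : EuclideanSpace ℝ (Fin n) | dist x x0 ∈ Set.Ico a ε0} with hOuter
  have hOmeas : MeasurableSet Outer := hdistm measurableSet_Ico
  have hintOuter : IntegrableOn f Outer := FMOaux_int n x0 Q hQ0 hQint hε0r hε0e.le ha0
  set Cout := ∫ x in Outer, f x with hCout
  have haee : a ≤ 1 / Real.exp 1 := haε0.trans hε0e.le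
  have hfpos : ∀ c : ℝ, 0 < c → ∀ x, dist x x0 ∈ Set.Ico c ε0 → 0 ≤ f x := by
    intro c hc x hx
    have hd0 : 0 < dist x x0 := lt_of_lt_of_le hc hx.1
    have hl1 : 0 ≤ Real.log (1 / dist x x0) := by
      have he1 : 1 / Real.exp 1 ≤ 1 := by
        rw [div_le_one (Real.exp_pos 1)]; linarith [Real.add_one_le_exp (1:ℝ)]
      have h2 : dist x x0 < 1 := lt_of_lt_of_le (lt_of_lt_of_le hx.2 hε0e.le) he1
      rw [one_div, Real.log_inv]
      simp only [Left.nonneg_neg_iff]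
      exact Real.log_nonpos hd0.le h2.le
    exact div_nonneg (hQ0 x) (pow_nonneg (mul_nonneg hd0.le hl1) n)
  have hCout0 : 0 ≤ Cout :=
    setIntegral_nonneg hOmeas (fun x hx => hfpos a ha0 x hx)
  refine ⟨2*C2 + Cout + 1, by positivity,
    min (a/2) (Real.exp (-(Real.exp 3))), ⟨lt_min (by linarith) (Real.exp_pos _),
      lt_of_le_of_lt (min_le_left _ _) (by linarith)⟩, ?_⟩
  intro ε hε
  obtain ⟨hεpos, hεlt⟩ := hε
  have hεa : ε < a := lt_of_lt_of_le hεlt ((min_le_left _ _).trans (by linarith))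
  have hεe3 : ε < Real.exp (-(Real.exp 3)) := lt_of_lt_of_le hεlt (min_le_right _ _)
  set L := Real.log (Real.log (1/ε)) with hL
  have hlog1ε : Real.exp 3 < Real.log (1/ε) := by
    have h1 := Real.log_lt_log hεpos hεe3
    rw [Real.log_exp] at h1
    rw [one_div, Real.log_inv]
    linarith
  have he3 : (1:ℝ) < Real.exp 3 := by nlinarith [Real.add_one_le_exp (3:ℝ)]
  have hlogε1 : 1 < Real.log (1/ε) := lt_trans he3 hlog1ε
  have hL3 : 3 < L := by
    rw [hL, show (3:ℝ) = Real.log (Real.exp 3) from (Real.log_exp 3).symm]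
    exact Real.log_lt_log (Real.exp_pos 3) hlog1ε
  -- choice of K
  set K := ⌈Real.logb 2 (a/ε)⌉₊ with hK
  have haε1 : 1 ≤ a/ε := (one_le_div hεpos).mpr hεa.le
  have hlogb0 : 0 ≤ Real.logb 2 (a/ε) := Real.logb_nonneg (by norm_num) haε1
  have h2K : a/ε ≤ 2^K := by
    calc a/ε = 2 ^ Real.logb 2 (a/ε) :=
          (Real.rpow_logb (by norm_num) (by norm_num) (by positivity)).symm
      _ ≤ 2 ^ (K:ℝ) := Real.rpow_le_rpow_of_exponent_le one_le_two (Nat.le_ceil _)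
      _ = 2^K := by rw [Real.rpow_natCast]
  have hKcov : a / 2^(K+1) ≤ ε := by
    have h1 : a / 2^K ≤ ε := by
      rw [div_le_iff₀ (by positivity)]
      rw [div_le_iff₀ hεpos] at h2K
      linarith [h2K]
    refine le_trans ?_ h1
    apply div_le_div_of_nonneg_left ha0.le (by positivity)
    have : (2:ℝ)^K ≤ 2^(K+1) := by
      apply pow_le_pow_right₀ (by norm_num) (by omega)
    linarith [this]
  -- annuli
  set A : ℕ → Set (EuclideanSpace ℝ (Fin n)) :=
    fun k => {x | dist x x0 ∈ Set.Ico (a/2^(k+1)) (a/2^k)} with hA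
  have hAmeas : ∀ k, MeasurableSet (A k) := fun k => hdistm measurableSet_Ico
  have hAsub : ∀ k, k ∈ Finset.range (K+1) →
      A k ⊆ {x | dist x x0 ∈ Set.Ico (a/2^(K+1)) ε0} := by
    intro k hk x hx
    have hkK : k ≤ K := Nat.lt_succ_iff.mp (Finset.mem_range.mp hk)
    have h21 : (2:ℝ)^(k+1) ≤ 2^(K+1) := pow_le_pow_right₀ (by norm_num) (by omega)
    have h1k : (1:ℝ) ≤ 2^k := by exact_mod_cast Nat.one_le_two_pow
    refine ⟨le_trans (div_le_div_of_nonneg_left ha0.le (by positivity) h21) hx.1, ?_⟩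
    exact lt_of_lt_of_le hx.2 ((div_le_self ha0.le h1k).trans haε0)
  set U := (⋃ k ∈ Finset.range (K+1), A k) ∪ Outer with hU
  have hUsub : U ⊆ {x | dist x x0 ∈ Set.Ico (a/2^(K+1)) ε0} := by
    intro x hx
    rcases hx with hx | hx
    · obtain ⟨k, hk, hxk⟩ := Set.mem_iUnion₂.mp hx
      exact hAsub k hk hxk
    · refine ⟨le_trans ?_ hx.1, hx.2⟩
      have h1 : (1:ℝ) ≤ 2^(K+1) := by exact_mod_cast Nat.one_le_two_pow
      exact div_le_self ha0.le h1
  have hUmeas : MeasurableSet U :=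
    (MeasurableSet.biUnion (Finset.range (K+1)).countable_toSet
      (fun k _ => hAmeas k)).union hOmeas
  have hintU : IntegrableOn f U :=
    (FMOaux_int n x0 Q hQ0 hQint hε0r hε0e.le (show 0 < a/2^(K+1) by positivity)).mono_set hUsub
  -- coverage
  have hcov : {x : EuclideanSpace ℝ (Fin n) | dist x x0 ∈ Set.Ioo ε ε0} ⊆ U := by
    intro x hx
    obtain ⟨hx1, hx2⟩ := hx
    by_cases hd : a ≤ dist x x0
    · exact Or.inr ⟨hd, hx2⟩
    · push_neg at hd
      have hex : ∃ m, a/2^(m+1) ≤ dist x x0 := ⟨K, le_trans hKcov hx1.le⟩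
      have hmK : Nat.find hex ≤ K := Nat.find_le (le_trans hKcov hx1.le)
      refine Or.inl (Set.mem_biUnion (Finset.mem_range.mpr (Nat.lt_succ_of_le hmK))
        ⟨Nat.find_spec hex, ?_⟩)
      rcases Nat.eq_zero_or_pos (Nat.find hex) with h0 | hpos
      · rw [h0]; simpa using hd
      · obtain ⟨j, hj⟩ := Nat.exists_eq_succ_of_ne_zero hpos.ne'
        have := Nat.find_min hex (m := j) (by omega)
        push_neg at this
        rw [hj]
        exact this
  -- disjointness
  have hdisjA : ∀ i j : ℕ, i < j → Disjoint (A i) (A j) := by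
    intro i j hij
    rw [Set.disjoint_left]
    intro x hxi hxj
    have h1 : (2:ℝ)^(i+1) ≤ 2^j := pow_le_pow_right₀ (by norm_num) (by omega)
    have h2 : a/2^j ≤ a/2^(i+1) := div_le_div_of_nonneg_left ha0.le (by positivity) h1
    exact absurd (lt_of_lt_of_le hxj.2 h2) (not_lt.mpr hxi.1)
  have hpair : (↑(Finset.range (K+1)) : Set ℕ).Pairwise (Function.onFun Disjoint A) := by
    intro i _ j _ hij
    rcases lt_or_gt_of_ne hij with h | h
    · exact hdisjA i j h
    · exact (hdisjA j i h).symm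
  have hdisjUO : Disjoint (⋃ k ∈ Finset.range (K+1), A k) Outer := by
    rw [Set.disjoint_left]
    intro x hx hxO
    obtain ⟨k, hk, hxk⟩ := Set.mem_iUnion₂.mp hx
    have h1k : (1:ℝ) ≤ 2^k := by exact_mod_cast Nat.one_le_two_pow
    exact absurd hxO.1 (not_le.mpr (lt_of_lt_of_le hxk.2 (div_le_self ha0.le h1k)))
  have hsplit : ∫ x in U, f x
      = (∑ k ∈ Finset.range (K+1), ∫ x in A k, f x) + Cout := by
    rw [hU, setIntegral_union hdisjUO hOmeas
      (hintU.mono_set Set.subset_union_left) (hintU.mono_set Set.subset_union_right),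
      integral_biUnion_finset _ (fun k _ => hAmeas k) hpair
      (fun k hk => hintU.mono_set
        (le_trans (fun x hx => Set.mem_biUnion hk hx) Set.subset_union_left))]
  have hmono : ∫ x in {x | dist x x0 ∈ Set.Ioo ε ε0}, f x ≤ ∫ x in U, f x :=
    setIntegral_mono_set hintU
      ((ae_restrict_iff' hUmeas).2 (Eventually.of_forall
        fun x hx => hfpos _ (by positivity) x (hUsub hx)))
      (HasSubset.Subset.eventuallyLE hcov)
  have hsum : (∑ k ∈ Finset.range (K+1), ∫ x in A k, f x)
      ≤ C2 * (1 + Real.log ((K:ℝ)+1)) := by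
    calc ∑ k ∈ Finset.range (K+1), ∫ x in A k, f x
        ≤ ∑ k ∈ Finset.range (K+1), C2 * (1/(k+1)) := Finset.sum_le_sum fun k _ => hann k
      _ = C2 * ∑ k ∈ Finset.range (K+1), (1:ℝ)/((k:ℝ)+1) := by
          rw [Finset.mul_sum]
      _ ≤ C2 * (1 + Real.log ((K:ℝ)+1)) := by
          refine mul_le_mul_of_nonneg_left ?_ hC20
          have h := harmonic_le_one_add_log (K+1)
          have heq : ((harmonic (K+1) : ℚ) : ℝ)
              = ∑ k ∈ Finset.range (K+1), (1:ℝ)/((k:ℝ)+1) := by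
            rw [harmonic]
            push_cast
            simp [one_div]
          rw [← heq]
          refine h.trans (le_of_eq ?_)
          push_cast
          ring
  -- numeric estimates
  have hlog2pos : (0:ℝ) < Real.log 2 := Real.log_pos one_lt_two
  have he1 : 1 / Real.exp 1 ≤ 1 := by
    rw [div_le_one (Real.exp_pos 1)]; linarith [Real.add_one_le_exp (1:ℝ)]
  have hloga0 : Real.log a ≤ 0 := Real.log_nonpos ha0.le (haee.trans he1)
  have hK4 : (K:ℝ) + 1 ≤ 4 * Real.log (1/ε) := by
    have h1 : (K:ℝ) < Real.logb 2 (a/ε) + 1 := Nat.ceil_lt_add_one hlogb0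
    have h2 : Real.logb 2 (a/ε) ≤ 2 * Real.log (1/ε) := by
      rw [Real.logb, div_le_iff₀ hlog2pos]
      have h3 : Real.log (a/ε) = Real.log a + Real.log (1/ε) := by
        rw [Real.log_div ha0.ne' hεpos.ne', one_div, Real.log_inv]; ring
      rw [h3]
      nlinarith [Real.log_two_gt_d9, hlogε1, hloga0]
    linarith
  have hlogK : Real.log ((K:ℝ)+1) ≤ Real.log 4 + L := by
    calc Real.log ((K:ℝ)+1) ≤ Real.log (4 * Real.log (1/ε)) :=
          Real.log_le_log (by positivity) hK4
      _ = Real.log 4 + L := by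
          rw [Real.log_mul (by norm_num) (by linarith : Real.log (1/ε) ≠ 0)]
  have hlog4 : Real.log 4 ≤ 2 := by
    rw [show (4:ℝ) = 2^2 by norm_num, Real.log_pow]
    push_cast
    nlinarith [Real.log_two_lt_d9]
  calc ∫ x in {x | dist x x0 ∈ Set.Ioo ε ε0}, f x ≤ ∫ x in U, f x := hmono
    _ = (∑ k ∈ Finset.range (K+1), ∫ x in A k, f x) + Cout := hsplit
    _ ≤ C2 * (1 + Real.log ((K:ℝ)+1)) + Cout := by linarith
    _ ≤ (2*C2 + Cout + 1) * L := by
        nlinarith [mul_le_mul_of_nonneg_left (show (1:ℝ) ≤ L by linarith) hCout0,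
          mul_le_mul_of_nonneg_left (show 1 + Real.log ((K:ℝ)+1) ≤ 2*L by linarith) hC20]
end

section
/- Let n ≥ 2, let p ∈ (1, n] be a real number, let x0 ∈ ℝⁿ, and let Q : ℝⁿ → [0, ∞) be integrable on some ball B(x0, r0) and have finite mean oscillation at x0. Then there exists ε0 ∈ (0, min(r0, 1/e)) such that, setting F(ε) = ∫_{ε < |x−x0| < ε0} Q(x) / (|x−x0| · log(1/|x−x0|))ⁿ dx and I(ε) = ∫_ε^{ε0} dt / (t · log(1/t))^{n/p}, one has F(ε) / I(ε)^p → 0 as ε → 0⁺ (i.e. F(ε) = o(I(ε)^p)). -/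
open MeasureTheory Metric Filter Topology

private lemma harm_le : ∀ K : ℕ, 1 ≤ K →
    ∑ k ∈ Finset.range K, (1:ℝ)/(k+1) ≤ 1 + Real.log K := by
  intro K
  induction K with
  | zero => intro h; omega
  | succ K ih =>
    intro _
    rcases Nat.eq_zero_or_pos K with hK0 | hK1
    · subst hK0; simp
    · have hKpos : (0:ℝ) < K := by exact_mod_cast hK1
      have hstep : (1:ℝ)/(K+1) ≤ Real.log (K+1) - Real.log K := by
        have h1 : Real.log ((K:ℝ)/(K+1)) ≤ (K:ℝ)/(K+1) - 1 :=
          Real.log_le_sub_one_of_pos (by positivity)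
        have h2 : Real.log ((K:ℝ)/(K+1)) = Real.log K - Real.log (K+1) :=
          Real.log_div (ne_of_gt hKpos) (by positivity)
        have h3 : (K:ℝ)/(K+1) - 1 = -(1/((K:ℝ)+1)) := by field_simp; ring
        rw [h2, h3] at h1; linarith
      have := ih hK1
      rw [Finset.sum_range_succ]
      push_cast
      push_cast at this
      linarith

private lemma aux_tendsto (p c A B : ℝ) (hp : 1 < p) (hA : 0 ≤ A) (hB : 0 ≤ B) :
    Tendsto (fun x : ℝ => (A + B*x)/(x - c)^p) atTop (𝓝 0) := by
  set C := max (A + B*c) 0 + B with hC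
  have hC0 : 0 ≤ C := by positivity
  have hshift : Tendsto (fun x : ℝ => x - c) atTop atTop :=
    tendsto_atTop_add_const_right _ (-c) tendsto_id
  have hg : Tendsto (fun x : ℝ => C * (x - c)^(1-p)) atTop (𝓝 0) := by
    have h1 : Tendsto (fun y : ℝ => y ^ (-(p-1))) atTop (𝓝 0) :=
      tendsto_rpow_neg_atTop (by linarith)
    have h2 := (h1.comp hshift).const_mul C
    simpa [mul_zero, Function.comp, show -(p-1) = 1-p by ring] using h2
  apply squeeze_zero' ?_ ?_ hg
  · filter_upwards [eventually_ge_atTop (max 0 (c+1))] with x hx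
    have hx0 : 0 ≤ x := le_trans (le_max_left _ _) hx
    have hxc : 0 < x - c := by
      have := le_trans (le_max_right _ _) hx; linarith
    positivity
  · filter_upwards [eventually_ge_atTop (max 0 (c+1))] with x hx
    have hx0 : 0 ≤ x := le_trans (le_max_left _ _) hx
    have hxc : 1 ≤ x - c := by
      have := le_trans (le_max_right _ _) hx; linarith
    have hxc0 : 0 < x - c := by linarith
    have hnum : A + B*x ≤ C * (x - c) := by
      have h1 : A + B*c ≤ max (A+B*c) 0 := le_max_left _ _
      have h2 : max (A+B*c) 0 ≤ max (A+B*c) 0 * (x-c) := by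
        nlinarith [le_max_right (A+B*c) 0]
      nlinarith
    have hpow : (x - c)^(1-p) = (x-c) / (x-c)^p := by
      rw [Real.rpow_sub hxc0, Real.rpow_one]
    have hdenpos : 0 < (x-c)^p := Real.rpow_pos_of_pos hxc0 _
    rw [hpow, mul_div_assoc']
    exact div_le_div_of_nonneg_right hnum hdenpos.le

set_option maxHeartbeats 2000000 in
/-- For `n ≥ 2`, `p ∈ (1, n]`, if `Q ≥ 0` is integrable on a ball
`B(x0, r0)` in `ℝⁿ` and has finite mean oscillation at `x0`, then there exists
`ε0 ∈ (0, min(r0, 1/e))` such that, with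
`F(ε) = ∫_{ε < |x−x0| < ε0} Q(x)/(|x−x0|·log(1/|x−x0|))ⁿ dx` and
`I(ε) = ∫_ε^{ε0} dt/(t·log(1/t))^{n/p}`, one has `F(ε)/I(ε)^p → 0` as `ε → 0⁺`. -/
theorem fmo_little_o_estimate (n : ℕ) (hn : 2 ≤ n) (p : ℝ) (hp₁ : 1 < p) (hp₂ : p ≤ (n : ℝ))
    (x0 : EuclideanSpace ℝ (Fin n)) (Q : EuclideanSpace ℝ (Fin n) → ℝ) (hQ0 : ∀ x, 0 ≤ Q x)
    (r0 : ℝ) (hr0 : 0 < r0) (hQint : IntegrableOn Q (ball x0 r0))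
    (hFMO : ∃ M : ℝ, ∀ᶠ ε in 𝓝[>] (0 : ℝ),
      ⨍ x in ball x0 ε, |Q x - ⨍ y in ball x0 ε, Q y| ≤ M) :
    ∃ ε0 ∈ Set.Ioo 0 (min r0 (1 / Real.exp 1)),
      Tendsto (fun ε : ℝ =>
          (∫ x in {x | dist x x0 ∈ Set.Ioo ε ε0},
              Q x / (dist x x0 * Real.log (1 / dist x x0)) ^ n) /
            (∫ t in Set.Ioo ε ε0, 1 / (t * Real.log (1 / t)) ^ ((n : ℝ) / p)) ^ p)
        (𝓝[>] (0 : ℝ)) (𝓝 0) := by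
  classical
  obtain ⟨M, hM⟩ := hFMO
  obtain ⟨δ, hδmem, hδ⟩ := mem_nhdsGT_iff_exists_Ioo_subset.mp hM
  have hδpos : (0:ℝ) < δ := hδmem
  have hepos : (0:ℝ) < 1 / Real.exp 1 := by positivity
  set ε0 : ℝ := min r0 (min δ (1 / Real.exp 1)) / 2 with hε0def
  have hε0pos : 0 < ε0 := by
    have : 0 < min r0 (min δ (1 / Real.exp 1)) := lt_min hr0 (lt_min hδpos hepos)
    positivity
  have hε0r0 : ε0 < r0 := by
    have h1 : min r0 (min δ (1 / Real.exp 1)) ≤ r0 := min_le_left _ _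
    have := hε0pos
    rw [hε0def] at *; linarith
  have hε0δ : ε0 < δ := by
    have h1 : min r0 (min δ (1 / Real.exp 1)) ≤ δ := le_trans (min_le_right _ _) (min_le_left _ _)
    have := hε0pos; rw [hε0def] at *; linarith
  have hε0e : ε0 < 1 / Real.exp 1 := by
    have h1 : min r0 (min δ (1 / Real.exp 1)) ≤ 1 / Real.exp 1 :=
      le_trans (min_le_right _ _) (min_le_right _ _)
    have := hε0pos; rw [hε0def] at *; linarith
  have hε0lt1 : ε0 < 1 := by
    have : 1 / Real.exp 1 < 1 := by
      rw [div_lt_one (Real.exp_pos 1)]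
      have := Real.exp_one_gt_d9; linarith
    linarith
  have hlogε0 : 1 < Real.log (1/ε0) := by
    rw [Real.lt_log_iff_exp_lt (by positivity)]
    rw [lt_div_iff₀ hε0pos, ← lt_div_iff₀' (Real.exp_pos 1)]
    exact hε0e
  refine ⟨ε0, ⟨hε0pos, lt_min hε0r0 hε0e⟩, ?_⟩
  set V : ℝ := (volume (ball (0 : EuclideanSpace ℝ (Fin n)) 1)).toReal with hVdef
  have hVpos : 0 < V := by
    rw [hVdef]
    refine ENNReal.toReal_pos (ne_of_gt (measure_ball_pos _ _ one_pos)) (ne_of_lt measure_ball_lt_top)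
  set A : ℝ → ℝ := fun r => ⨍ x in ball x0 r, Q x with hAdef
  set C2 : ℝ := 2^n*M with hC2def
  set Ec : ℝ := 2^n * V * (A ε0 + C2) / (Real.log 2)^n with hEcdef
  set ℓ : ℝ → ℝ := fun ε => Real.log (Real.log (1/ε)) with hℓdef
  set c : ℝ := Real.log (Real.log (1/ε0)) with hcdef
  have hM0 : 0 ≤ M := by
    have hmem : δ/2 ∈ Set.Ioo (0:ℝ) δ := ⟨by linarith, by linarith⟩
    have h1 := hδ hmem
    refine le_trans ?_ h1
    rw [setAverage_eq]
    exact smul_nonneg (by positivity) (integral_nonneg fun x => abs_nonneg _)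
  have hA0 : 0 ≤ A ε0 := by
    rw [hAdef]
    simp only []
    rw [setAverage_eq]
    exact smul_nonneg (by positivity) (integral_nonneg fun x => hQ0 x)
  have hEc0 : 0 ≤ Ec := by
    have h2 : (0:ℝ) < Real.log 2 := Real.log_pos one_lt_two
    rw [hEcdef, hC2def]
    positivity
  haveI : Nontrivial (EuclideanSpace ℝ (Fin n)) := by
    apply Module.nontrivial_of_finrank_pos (R := ℝ)
    rw [finrank_euclideanSpace_fin]
    omega
  have hvolpos : ∀ r : ℝ, 0 < r → 0 < (volume (ball x0 r)).toReal := fun r hr =>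
    ENNReal.toReal_pos (ne_of_gt (measure_ball_pos _ _ hr)) (ne_of_lt measure_ball_lt_top)
  have hvol : ∀ r : ℝ, 0 ≤ r → (volume (ball x0 r)).toReal = r^n * V := by
    intro r hr
    rw [Measure.addHaar_ball volume x0 hr, finrank_euclideanSpace_fin, ENNReal.toReal_mul,
      ENNReal.toReal_ofReal (by positivity)]
  have hQon : ∀ r : ℝ, r ≤ r0 → IntegrableOn Q (ball x0 r) volume := fun r hr =>
    hQint.mono_set (ball_subset_ball hr)
  have hstep : ∀ r : ℝ, 0 < r → r ≤ ε0 → A (r/2) ≤ A r + 2^n * M := by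
    intro r hrpos hrle
    set m := (volume (ball x0 r)).toReal with hmdef
    set m' := (volume (ball x0 (r/2))).toReal with hm'def
    have hm : 0 < m := hvolpos r hrpos
    have hm' : 0 < m' := hvolpos (r/2) (by linarith)
    have hQr : IntegrableOn Q (ball x0 r) volume := hQon r (by linarith)
    have hQr' : IntegrableOn Q (ball x0 (r/2)) volume := hQon (r/2) (by linarith)
    have hconst : IntegrableOn (fun _ => A r) (ball x0 (r/2)) volume :=
      integrableOn_const measure_ball_lt_top.ne
    have hconst2 : IntegrableOn (fun _ => A r) (ball x0 r) volume :=
      integrableOn_const measure_ball_lt_top.ne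
    have hsub1 : IntegrableOn (fun x => |Q x - A r|) (ball x0 r) volume :=
      (hQr.sub hconst2).abs
    have hFMOr : ⨍ x in ball x0 r, |Q x - A r| ≤ M := hδ ⟨hrpos, lt_of_le_of_lt hrle hε0δ⟩
    have habs : ∫ x in ball x0 r, |Q x - A r| ≤ m * M := by
      have h1 : ⨍ x in ball x0 r, |Q x - A r| = m⁻¹ * ∫ x in ball x0 r, |Q x - A r| := by
        rw [setAverage_eq, smul_eq_mul]; rfl
      have h2 := mul_le_mul_of_nonneg_left hFMOr hm.le
      rw [h1, ← mul_assoc, mul_inv_cancel₀ (ne_of_gt hm), one_mul] at h2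
      exact h2
    have key : (∫ x in ball x0 (r/2), Q x) ≤ m' * A r + m * M := by
      have e1 : ∫ x in ball x0 (r/2), (Q x - A r) = (∫ x in ball x0 (r/2), Q x) - m' * A r := by
        rw [integral_sub hQr' hconst, setIntegral_const, smul_eq_mul]; rfl
      have e2 : ∫ x in ball x0 (r/2), (Q x - A r) ≤ ∫ x in ball x0 (r/2), |Q x - A r| :=
        integral_mono (hQr'.sub hconst) (hQr'.sub hconst).abs fun x => le_abs_self _
      have e3 : ∫ x in ball x0 (r/2), |Q x - A r| ≤ ∫ x in ball x0 r, |Q x - A r| :=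
        setIntegral_mono_set hsub1 (Filter.Eventually.of_forall fun x => abs_nonneg _)
          ((ball_subset_ball (by linarith)).eventuallyLE)
      linarith
    have hA' : A (r/2) = m'⁻¹ * ∫ x in ball x0 (r/2), Q x := by
      show (fun r => ⨍ x in ball x0 r, Q x) (r/2) = _
      simp only []
      rw [setAverage_eq, smul_eq_mul]; rfl
    have hratio : m / m' = 2^n := by
      rw [hmdef, hm'def, hvol r hrpos.le, hvol (r/2) (by linarith), div_pow]
      field_simp
    have hfin : m'⁻¹ * (m' * A r + m * M) = A r + (m / m') * M := by
      field_simp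
    rw [hA', ← hratio]
    calc m'⁻¹ * ∫ x in ball x0 (r/2), Q x ≤ m'⁻¹ * (m' * A r + m * M) :=
          mul_le_mul_of_nonneg_left key (inv_nonneg.mpr hm'.le)
      _ = A r + (m / m') * M := hfin
  have hAk : ∀ k : ℕ, A (ε0/2^k) ≤ A ε0 + (k:ℝ) * (2^n*M) := by
    intro k
    induction k with
    | zero => simp
    | succ k ih =>
      have hrpos : 0 < ε0/2^k := by positivity
      have hrle : ε0/2^k ≤ ε0 := by
        apply div_le_self hε0pos.le (one_le_pow₀ (by norm_num))
      have h1 := hstep _ hrpos hrle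
      have h2 : ε0/2^(k+1) = (ε0/2^k)/2 := by rw [pow_succ, ← div_div]
      rw [h2]
      push_cast
      linarith
  have hμQ : ∀ k : ℕ, (∫ x in ball x0 (ε0/2^k), Q x)
      ≤ (ε0/2^k)^n * V * (A ε0 + (k:ℝ)*(2^n*M)) := by
    intro k
    have hrpos : 0 < ε0/2^k := by positivity
    have hint : ∫ x in ball x0 (ε0/2^k), Q x
        = (volume (ball x0 (ε0/2^k))).toReal * A (ε0/2^k) := by
      have h1 : A (ε0/2^k) = (volume (ball x0 (ε0/2^k))).toReal⁻¹
          * ∫ x in ball x0 (ε0/2^k), Q x := by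
        show (fun r => ⨍ x in ball x0 r, Q x) (ε0/2^k) = _
        simp only []
        rw [setAverage_eq, smul_eq_mul]; rfl
      rw [h1, ← mul_assoc, mul_inv_cancel₀ (ne_of_gt (hvolpos _ hrpos)), one_mul]
    rw [hint, hvol _ hrpos.le]
    exact mul_le_mul_of_nonneg_left (hAk k) (by positivity)
  have hFnonneg : ∀ ε : ℝ, 0 < ε → ε < ε0 →
      0 ≤ ∫ x in {x | dist x x0 ∈ Set.Ioo ε ε0},
            Q x / (dist x x0 * Real.log (1 / dist x x0)) ^ n := by
    intro ε hεpos hεlt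
    have hmeas : MeasurableSet {x : EuclideanSpace ℝ (Fin n) | dist x x0 ∈ Set.Ioo ε ε0} :=
      (continuous_id.dist continuous_const).measurable measurableSet_Ioo
    refine setIntegral_nonneg hmeas fun x hx => ?_
    obtain ⟨hd1, hd2⟩ := hx
    have hdpos : 0 < dist x x0 := lt_trans hεpos hd1
    have hlog : 0 ≤ Real.log (1 / dist x x0) :=
      Real.log_nonneg (by rw [le_div_iff₀ hdpos]; nlinarith [hε0lt1])
    exact div_nonneg (hQ0 x) (pow_nonneg (mul_nonneg dist_nonneg hlog) n)
  have hFbound : ∀ ε : ℝ, 0 < ε → ε < ε0 →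
      (∫ x in {x | dist x x0 ∈ Set.Ioo ε ε0},
          Q x / (dist x x0 * Real.log (1 / dist x x0)) ^ n)
        ≤ Ec * (1 + Real.log 3) + Ec * ℓ ε := by
    intro ε hεpos hεlt
    have hlog2pos : (0:ℝ) < Real.log 2 := Real.log_pos one_lt_two
    have hlog2lt1 : Real.log 2 < 1 := by
      have := Real.log_two_lt_d9; linarith
    set K := ⌈Real.logb 2 (ε0/ε)⌉₊ with hKdef
    have hlogbpos : 0 < Real.logb 2 (ε0/ε) :=
      Real.logb_pos one_lt_two (by rw [lt_div_iff₀ hεpos]; linarith)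
    have hK1 : 1 ≤ K := Nat.one_le_iff_ne_zero.mpr (by
      intro h0
      have := Nat.ceil_pos.mpr hlogbpos
      omega)
    have hKpos : (0:ℝ) < (K:ℝ) := by exact_mod_cast hK1
    have hrK : ε0/2^K ≤ ε := by
      have h1 : (ε0/ε) ≤ 2^(K:ℝ) := by
        calc ε0/ε = (2:ℝ) ^ Real.logb 2 (ε0/ε) :=
              (Real.rpow_logb two_pos (by norm_num) (by positivity)).symm
          _ ≤ 2^(K:ℝ) := Real.rpow_le_rpow_of_exponent_le one_le_two (Nat.le_ceil _)
      rw [Real.rpow_natCast] at h1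
      rw [div_le_iff₀ hεpos] at h1
      rw [div_le_iff₀ (by positivity : (0:ℝ) < 2^K)]
      linarith [mul_comm ε ((2:ℝ)^K)]
    have hanti : ∀ i j : ℕ, i ≤ j → ε0/2^j ≤ ε0/2^i := by
      intro i j hij
      rw [div_le_div_iff₀ (by positivity) (by positivity)]
      exact mul_le_mul_of_nonneg_left (pow_le_pow_right₀ one_le_two hij) hε0pos.le
    have hrpos : ∀ k : ℕ, (0:ℝ) < ε0/2^k := fun k => by positivity
    have hrle0 : ∀ k : ℕ, ε0/2^k ≤ ε0 := fun k => by
      simpa using hanti 0 k (Nat.zero_le k)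
    set S : ℕ → Set (EuclideanSpace ℝ (Fin n)) :=
      fun k => {x | dist x x0 ∈ Set.Ico (ε0/2^(k+1)) (ε0/2^k)} with hSdef
    have hSmeas : ∀ k, MeasurableSet (S k) := fun k =>
      (continuous_id.dist continuous_const).measurable measurableSet_Ico
    have hSball : ∀ k, S k ⊆ ball x0 (ε0/2^k) := fun k x hx => mem_ball.mpr hx.2
    have hSr0 : ∀ k, S k ⊆ ball x0 r0 := fun k =>
      (hSball k).trans (ball_subset_ball (le_trans (hrle0 k) hε0r0.le))
    set f : EuclideanSpace ℝ (Fin n) → ℝ :=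
      fun x => Q x / (dist x x0 * Real.log (1 / dist x x0)) ^ n with hfdef
    have hfmeas : AEStronglyMeasurable f (volume.restrict (ball x0 r0)) := by
      have hden : Measurable fun x : EuclideanSpace ℝ (Fin n) =>
          (dist x x0 * Real.log (1/dist x x0))^n :=
        (((continuous_id.dist continuous_const).measurable.mul
          (Real.measurable_log.comp
            (measurable_const.div (continuous_id.dist continuous_const).measurable))).pow_const n)
      have h2 := hQint.aestronglyMeasurable.mul hden.inv.aestronglyMeasurable
      rw [hfdef]; simp only [div_eq_mul_inv]; exact h2
    set Lk : ℕ → ℝ := fun k => Real.log (1/(ε0/2^k)) with hLkdef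
    have hLk_eq : ∀ k : ℕ, Lk k = k*Real.log 2 + Real.log (1/ε0) := by
      intro k
      show Real.log (1/(ε0/2^k)) = _
      rw [one_div_div]
      rw [show (2:ℝ)^k / ε0 = 2^k * (1/ε0) by ring]
      rw [Real.log_mul (by positivity) (by positivity), Real.log_pow]
    have hLklb : ∀ k : ℕ, ((k:ℝ)+1)*Real.log 2 ≤ Lk k := by
      intro k
      rw [hLk_eq k]
      nlinarith
    have hLkpos : ∀ k : ℕ, 0 < Lk k := fun k =>
      lt_of_lt_of_le (by positivity) (hLklb k)
    -- pointwise bound on S k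
    have hptwise : ∀ k : ℕ, ∀ x ∈ S k,
        f x ≤ Q x * (((ε0/2^(k+1)) * Lk k)^n)⁻¹ := by
      intro k x hx
      obtain ⟨hd1, hd2⟩ := hx
      have hdpos : 0 < dist x x0 := lt_of_lt_of_le (hrpos (k+1)) hd1
      have hlogd : Lk k ≤ Real.log (1/dist x x0) := by
        apply Real.log_le_log (by positivity)
        rw [div_le_div_iff₀ (hrpos k) hdpos]
        nlinarith
      have hprod : (ε0/2^(k+1)) * Lk k ≤ dist x x0 * Real.log (1/dist x x0) :=
        mul_le_mul hd1 hlogd (hLkpos k).le dist_nonneg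
      have hppos : 0 < (ε0/2^(k+1)) * Lk k := mul_pos (hrpos (k+1)) (hLkpos k)
      have hpow : ((ε0/2^(k+1)) * Lk k)^n ≤ (dist x x0 * Real.log (1/dist x x0))^n :=
        pow_le_pow_left₀ hppos.le hprod n
      rw [hfdef]
      simp only []
      rw [div_eq_mul_inv]
      exact mul_le_mul_of_nonneg_left
        (inv_anti₀ (by positivity) hpow) (hQ0 x)
    have hgint : ∀ k : ℕ, IntegrableOn
        (fun x => Q x * (((ε0/2^(k+1)) * Lk k)^n)⁻¹) (S k) volume :=
      fun k => (hQint.mono_set (hSr0 k)).mul_const _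
    have hfnonnegS : ∀ k : ℕ, ∀ x ∈ S k, 0 ≤ f x := by
      intro k x hx
      obtain ⟨hd1, hd2⟩ := hx
      have hdpos : 0 < dist x x0 := lt_of_lt_of_le (hrpos (k+1)) hd1
      have hdlt1 : dist x x0 < 1 := lt_of_lt_of_le hd2 ((hrle0 k).trans hε0lt1.le)
      have hlognn : 0 ≤ Real.log (1/dist x x0) :=
        Real.log_nonneg (by rw [le_div_iff₀ hdpos]; linarith)
      exact div_nonneg (hQ0 x) (pow_nonneg (mul_nonneg dist_nonneg hlognn) n)
    have hfint : ∀ k : ℕ, IntegrableOn f (S k) volume := by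
      intro k
      apply Integrable.mono' (hgint k)
        (hfmeas.mono_measure (Measure.restrict_mono (hSr0 k) le_rfl))
      rw [ae_restrict_iff' (hSmeas k)]
      filter_upwards with x hx
      rw [Real.norm_eq_abs, abs_of_nonneg (hfnonnegS k x hx)]
      exact hptwise k x hx
    -- per-annulus estimate
    have htermk : ∀ k : ℕ, (∫ x in S k, f x) ≤ Ec * (1/((k:ℝ)+1)) := by
      intro k
      have hW : (0:ℝ) ≤ (((ε0/2^(k+1)) * Lk k)^n)⁻¹ :=
        inv_nonneg.mpr (pow_nonneg (mul_pos (hrpos (k+1)) (hLkpos k)).le n)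
      have step1 : (∫ x in S k, f x)
          ≤ ∫ x in S k, Q x * (((ε0/2^(k+1)) * Lk k)^n)⁻¹ :=
        setIntegral_mono_on (hfint k) (hgint k) (hSmeas k) (hptwise k)
      have step2 : (∫ x in S k, Q x * (((ε0/2^(k+1)) * Lk k)^n)⁻¹)
          = (∫ x in S k, Q x) * (((ε0/2^(k+1)) * Lk k)^n)⁻¹ :=
        integral_mul_const _ _
      have step3 : (∫ x in S k, Q x) ≤ ∫ x in ball x0 (ε0/2^k), Q x :=
        setIntegral_mono_set (hQon _ ((hrle0 k).trans hε0r0.le))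
          (Filter.Eventually.of_forall fun x => hQ0 x)
          ((hSball k).eventuallyLE)
      have step4 := hμQ k
      have hA0k : (0:ℝ) ≤ A ε0 + (k:ℝ)*(2^n*M) := by
        have : (0:ℝ) ≤ (k:ℝ) * (2^n*M) := by positivity
        linarith
      -- algebra
      have halg : ((ε0/2^k)^n * V * (A ε0 + (k:ℝ)*(2^n*M)))
            * (((ε0/2^(k+1)) * Lk k)^n)⁻¹ ≤ Ec * (1/((k:ℝ)+1)) := by
        have e0 : (ε0/2^k) = 2*(ε0/2^(k+1)) := by
          rw [pow_succ]; field_simp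
        have hr'pos : (0:ℝ) < ε0/2^(k+1) := hrpos (k+1)
        have e1 : ((ε0/2^k)^n * V * (A ε0 + (k:ℝ)*(2^n*M)))
              * (((ε0/2^(k+1)) * Lk k)^n)⁻¹
            = 2^n * V * (A ε0 + (k:ℝ)*(2^n*M)) * ((Lk k)^n)⁻¹ := by
          have hne : ((ε0/2^(k+1))^n) ≠ 0 := by positivity
          have hLne : ((Lk k)^n) ≠ 0 := ne_of_gt (pow_pos (hLkpos k) n)
          rw [e0, mul_pow, mul_pow, mul_inv]
          field_simp
        rw [e1]
        have h2 : ((k:ℝ)+1)^2 * (Real.log 2)^n ≤ (Lk k)^n := by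
          have ha : (((k:ℝ)+1)*Real.log 2)^n ≤ (Lk k)^n :=
            pow_le_pow_left₀ (by positivity) (hLklb k) n
          have hb : ((k:ℝ)+1)^2 ≤ ((k:ℝ)+1)^n := by
            apply pow_le_pow_right₀ (by linarith [Nat.cast_nonneg (α := ℝ) k]) hn
          rw [mul_pow] at ha
          nlinarith [pow_pos hlog2pos n, pow_nonneg (by positivity : (0:ℝ) ≤ (k:ℝ)+1) n]
        have h3 : ((Lk k)^n)⁻¹ ≤ (((k:ℝ)+1)^2 * (Real.log 2)^n)⁻¹ :=
          inv_anti₀ (by positivity) h2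
        have h4 : A ε0 + (k:ℝ)*(2^n*M) ≤ (A ε0 + 2^n*M) * ((k:ℝ)+1) := by
          have hk0 : (0:ℝ) ≤ (k:ℝ) := Nat.cast_nonneg k
          have h2nM : (0:ℝ) ≤ 2^n*M := by positivity
          nlinarith
        have h5 : 2^n * V * (A ε0 + (k:ℝ)*(2^n*M)) * ((Lk k)^n)⁻¹
            ≤ 2^n * V * ((A ε0 + 2^n*M) * ((k:ℝ)+1)) * (((k:ℝ)+1)^2 * (Real.log 2)^n)⁻¹ := by
          apply mul_le_mul
          · exact mul_le_mul_of_nonneg_left h4 (by positivity)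
          · exact h3
          · exact inv_nonneg.mpr (pow_nonneg (hLkpos k).le n)
          · have hkk : (0:ℝ) ≤ (k:ℝ)+1 := by positivity
            have h2nM : (0:ℝ) ≤ 2^n*M := by positivity
            have : (0:ℝ) ≤ (A ε0 + 2^n*M) * ((k:ℝ)+1) := by nlinarith
            positivity
        refine le_trans h5 (le_of_eq ?_)
        rw [hEcdef, hC2def]
        have hk1 : ((k:ℝ)+1) ≠ 0 := by positivity
        field_simp
      calc (∫ x in S k, f x) ≤ (∫ x in S k, Q x) * (((ε0/2^(k+1)) * Lk k)^n)⁻¹ := by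
            rw [← step2]; exact step1
        _ ≤ ((ε0/2^k)^n * V * (A ε0 + (k:ℝ)*(2^n*M))) * (((ε0/2^(k+1)) * Lk k)^n)⁻¹ :=
            mul_le_mul_of_nonneg_right (le_trans step3 step4) hW
        _ ≤ Ec * (1/((k:ℝ)+1)) := halg
    -- covering
    have hcover : {x : EuclideanSpace ℝ (Fin n) | dist x x0 ∈ Set.Ioo ε ε0}
        ⊆ ⋃ k ∈ Finset.range K, S k := by
      intro x hx
      obtain ⟨hx1, hx2⟩ := hx
      have hex : ∃ j : ℕ, ε0/2^j ≤ dist x x0 := ⟨K, le_trans hrK hx1.le⟩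
      have hm := Nat.find_spec hex
      have hm0 : Nat.find hex ≠ 0 := by
        intro h0
        rw [h0] at hm
        simp at hm
        linarith
      obtain ⟨j, hj⟩ : ∃ j, Nat.find hex = j+1 :=
        ⟨Nat.find hex - 1, (Nat.succ_pred_eq_of_pos (Nat.pos_of_ne_zero hm0)).symm⟩
      have hjlt : ¬(ε0/2^j ≤ dist x x0) := Nat.find_min hex (by omega)
      have hmK : Nat.find hex ≤ K := Nat.find_le (le_trans hrK hx1.le)
      apply Set.mem_biUnion (Finset.mem_range.mpr (by omega : j < K))
      exact ⟨by rw [← hj]; exact hm, not_le.mp hjlt⟩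
    have hdisj : ((Finset.range K : Finset ℕ) : Set ℕ).Pairwise (Function.onFun Disjoint S) := by
      intro i _ j _ hij
      have key : ∀ a b : ℕ, a < b → Disjoint (S a) (S b) := by
        intro a b hab
        rw [Set.disjoint_left]
        rintro x ⟨ha1, ha2⟩ ⟨hb1, hb2⟩
        have h1 : ε0/2^b ≤ ε0/2^(a+1) := hanti (a+1) b hab
        linarith
      rcases lt_or_gt_of_ne hij with h | h
      · exact key i j h
      · exact (key j i h).symm
    have hUint : IntegrableOn f (⋃ k ∈ Finset.range K, S k) volume :=
      integrableOn_finset_iUnion.2 fun k _ => hfint k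
    have hUmeas : MeasurableSet (⋃ k ∈ Finset.range K, S k) :=
      Finset.measurableSet_biUnion _ fun k _ => hSmeas k
    have hmono1 : (∫ x in {x : EuclideanSpace ℝ (Fin n) | dist x x0 ∈ Set.Ioo ε ε0}, f x)
        ≤ ∫ x in ⋃ k ∈ Finset.range K, S k, f x := by
      have hae : ∀ᵐ x ∂(volume.restrict (⋃ k ∈ Finset.range K, S k)), 0 ≤ f x := by
        rw [ae_restrict_iff' hUmeas]
        filter_upwards with x hx
        obtain ⟨k, _, hk⟩ := Set.mem_iUnion₂.mp hx
        exact hfnonnegS k x hk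
      exact setIntegral_mono_set hUint hae (Filter.Eventually.of_forall hcover)
    have hsum : (∫ x in ⋃ k ∈ Finset.range K, S k, f x)
        = ∑ k ∈ Finset.range K, ∫ x in S k, f x :=
      integral_biUnion_finset _ (fun k _ => hSmeas k) hdisj (fun k _ => hfint k)
    have hsumle : (∑ k ∈ Finset.range K, ∫ x in S k, f x)
        ≤ Ec * (1 + Real.log K) := by
      calc (∑ k ∈ Finset.range K, ∫ x in S k, f x)
          ≤ ∑ k ∈ Finset.range K, Ec * (1/((k:ℝ)+1)) :=
            Finset.sum_le_sum fun k _ => htermk k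
        _ = Ec * ∑ k ∈ Finset.range K, 1/((k:ℝ)+1) := by rw [Finset.mul_sum]
        _ ≤ Ec * (1 + Real.log K) :=
            mul_le_mul_of_nonneg_left (harm_le K hK1) hEc0
    -- bound log K
    have hlog1ε : 1 ≤ Real.log (1/ε) := by
      rw [Real.le_log_iff_exp_le (by positivity)]
      rw [le_div_iff₀ hεpos]
      have h1 : ε < 1/Real.exp 1 := lt_trans hεlt hε0e
      have h2 : Real.exp 1 * ε < Real.exp 1 * (1/Real.exp 1) :=
        mul_lt_mul_of_pos_left h1 (Real.exp_pos 1)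
      rw [mul_one_div, div_self (ne_of_gt (Real.exp_pos 1))] at h2
      linarith
    have hKle : (K:ℝ) ≤ 3 * Real.log (1/ε) := by
      have h1 : (K:ℝ) < Real.logb 2 (ε0/ε) + 1 := Nat.ceil_lt_add_one hlogbpos.le
      have h2 : Real.logb 2 (ε0/ε) = Real.log (ε0/ε) / Real.log 2 := rfl
      have h3 : Real.log (ε0/ε) ≤ Real.log (1/ε) := by
        apply Real.log_le_log (by positivity)
        exact (div_le_div_iff_of_pos_right hεpos).mpr hε0lt1.le
      have h4 : Real.log (ε0/ε) / Real.log 2 ≤ 2 * Real.log (1/ε) := by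
        rw [div_le_iff₀ hlog2pos]
        nlinarith [Real.log_two_gt_d9]
      rw [h2] at h1
      linarith
    have hlogK : Real.log K ≤ Real.log 3 + ℓ ε := by
      have h1 : Real.log K ≤ Real.log (3 * Real.log (1/ε)) :=
        Real.log_le_log hKpos hKle
      rw [Real.log_mul (by norm_num) (by linarith)] at h1
      exact h1
    have hfinal : (∫ x in {x : EuclideanSpace ℝ (Fin n) | dist x x0 ∈ Set.Ioo ε ε0}, f x)
        ≤ Ec * (1 + (Real.log 3 + ℓ ε)) := by
      have := le_trans hmono1 (le_trans (le_of_eq hsum) hsumle)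
      have h2 : Ec * (1 + Real.log K) ≤ Ec * (1 + (Real.log 3 + ℓ ε)) :=
        mul_le_mul_of_nonneg_left (by linarith) hEc0
      linarith
    calc (∫ x in {x : EuclideanSpace ℝ (Fin n) | dist x x0 ∈ Set.Ioo ε ε0},
            Q x / (dist x x0 * Real.log (1 / dist x x0)) ^ n)
        = ∫ x in {x : EuclideanSpace ℝ (Fin n) | dist x x0 ∈ Set.Ioo ε ε0}, f x := rfl
      _ ≤ Ec * (1 + (Real.log 3 + ℓ ε)) := hfinal
      _ = Ec * (1 + Real.log 3) + Ec * ℓ ε := by ring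
  have hIbound : ∀ ε : ℝ, 0 < ε → ε < ε0 →
      ℓ ε - c ≤ ∫ t in Set.Ioo ε ε0, 1 / (t * Real.log (1 / t)) ^ ((n : ℝ) / p) := by
    intro ε hεpos hεlt
    have hle : ε ≤ ε0 := hεlt.le
    have hnp : 1 ≤ (n:ℝ)/p := by
      rw [le_div_iff₀ (by linarith : (0:ℝ) < p)]; linarith
    -- basic pointwise facts on Icc ε ε0
    have hbase : ∀ t ∈ Set.Icc ε ε0, 0 < t * Real.log (1/t) ∧ t * Real.log (1/t) ≤ 1 := by
      intro t ht
      have htpos : 0 < t := lt_of_lt_of_le hεpos ht.1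
      have htlt1 : t < 1 := lt_of_le_of_lt ht.2 hε0lt1
      have hlogpos : 0 < Real.log (1/t) :=
        Real.log_pos (by rw [lt_div_iff₀ htpos]; linarith)
      constructor
      · positivity
      · have h1 : Real.log (1/t) ≤ 1/t - 1 := Real.log_le_sub_one_of_pos (by positivity)
        have h2 : t * Real.log (1/t) ≤ t * (1/t - 1) :=
          mul_le_mul_of_nonneg_left h1 htpos.le
        have h3 : t * (1/t - 1) = 1 - t := by field_simp
        linarith
    have hbcont : ContinuousOn (fun t : ℝ => t * Real.log (1/t)) (Set.Icc ε ε0) := by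
      have h1 : ContinuousOn (fun t : ℝ => Real.log (1/t)) (Set.Icc ε ε0) := by
        have h0 : ContinuousOn (fun t : ℝ => 1/t) (Set.Icc ε ε0) :=
          continuousOn_const.div continuousOn_id fun t ht =>
            ne_of_gt (lt_of_lt_of_le hεpos ht.1)
        exact Real.continuousOn_log.comp h0 fun t ht => by
          have h2 : (0:ℝ) < 1/t := by
            have := lt_of_lt_of_le hεpos ht.1; positivity
          exact ne_of_gt h2
      exact continuousOn_id.mul h1
    have hcont1 : ContinuousOn (fun t : ℝ => (t * Real.log (1/t))⁻¹) (Set.Icc ε ε0) := by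
      apply ContinuousOn.inv₀ hbcont
      intro t ht; exact ne_of_gt (hbase t ht).1
    have hcont2 : ContinuousOn
        (fun t : ℝ => 1 / (t * Real.log (1 / t)) ^ ((n : ℝ) / p)) (Set.Icc ε ε0) := by
      apply ContinuousOn.div continuousOn_const
      · exact hbcont.rpow_const fun t ht => Or.inl (ne_of_gt (hbase t ht).1)
      · intro t ht
        exact ne_of_gt (Real.rpow_pos_of_pos (hbase t ht).1 _)
    have hint1 : IntegrableOn (fun t : ℝ => (t * Real.log (1/t))⁻¹) (Set.Ioo ε ε0) :=
      (hcont1.integrableOn_Icc).mono_set Set.Ioo_subset_Icc_self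
    have hint2 : IntegrableOn
        (fun t : ℝ => 1 / (t * Real.log (1 / t)) ^ ((n : ℝ) / p)) (Set.Ioo ε ε0) :=
      (hcont2.integrableOn_Icc).mono_set Set.Ioo_subset_Icc_self
    have hmono : ∀ t ∈ Set.Ioo ε ε0,
        (t * Real.log (1/t))⁻¹ ≤ 1 / (t * Real.log (1 / t)) ^ ((n : ℝ) / p) := by
      intro t ht
      obtain ⟨hb1, hb2⟩ := hbase t (Set.Ioo_subset_Icc_self ht)
      have hr : (t * Real.log (1/t)) ^ ((n : ℝ) / p) ≤ (t * Real.log (1/t)) ^ (1:ℝ) :=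
        Real.rpow_le_rpow_of_exponent_ge hb1 hb2 hnp
      rw [Real.rpow_one] at hr
      rw [one_div ((t * Real.log (1/t)) ^ ((n:ℝ) / p))]
      exact inv_anti₀ (Real.rpow_pos_of_pos hb1 _) hr
    have hstep1 : (∫ t in Set.Ioo ε ε0, (t * Real.log (1/t))⁻¹)
        ≤ ∫ t in Set.Ioo ε ε0, 1 / (t * Real.log (1 / t)) ^ ((n : ℝ) / p) :=
      setIntegral_mono_on hint1 hint2 measurableSet_Ioo hmono
    -- compute the left integral by FTC
    have hFTC : (∫ t in Set.Ioo ε ε0, (t * Real.log (1/t))⁻¹) = ℓ ε - c := by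
      have hderiv : ∀ t ∈ Set.uIcc ε ε0,
          HasDerivAt (fun t : ℝ => -Real.log (-Real.log t)) ((t * Real.log (1/t))⁻¹) t := by
        intro t ht
        rw [Set.uIcc_of_le hle] at ht
        have htpos : 0 < t := lt_of_lt_of_le hεpos ht.1
        have htlt1 : t < 1 := lt_of_le_of_lt ht.2 hε0lt1
        have hlogneg : Real.log t < 0 := Real.log_neg htpos htlt1
        have h1 : HasDerivAt Real.log t⁻¹ t := Real.hasDerivAt_log (ne_of_gt htpos)
        have h2 : HasDerivAt (fun t : ℝ => -Real.log t) (-t⁻¹) t := h1.neg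
        have h3 : HasDerivAt Real.log (-Real.log t)⁻¹ (-Real.log t) :=
          Real.hasDerivAt_log (by linarith)
        have h4 := (h3.comp t h2).neg
        have heq : -((-Real.log t)⁻¹ * -t⁻¹) = (t * Real.log (1/t))⁻¹ := by
          have hl : Real.log (1/t) = -Real.log t := by rw [one_div, Real.log_inv]
          rw [hl, mul_inv]
          ring
        rw [← heq]
        exact h4
      have hII : IntervalIntegrable (fun t : ℝ => (t * Real.log (1/t))⁻¹) volume ε ε0 := by
        apply ContinuousOn.intervalIntegrable
        rwa [Set.uIcc_of_le hle]
      have := intervalIntegral.integral_eq_sub_of_hasDerivAt hderiv hII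
      rw [intervalIntegral.integral_of_le hle, integral_Ioc_eq_integral_Ioo] at this
      rw [this, hℓdef, hcdef]
      simp only [one_div, Real.log_inv]
      ring
    linarith [hstep1, hFTC.ge, hFTC.le]
  -- ℓ tends to infinity
  have hℓtop : Tendsto ℓ (𝓝[>] (0:ℝ)) atTop := by
    have h1 : Tendsto (fun ε : ℝ => 1/ε) (𝓝[>] (0:ℝ)) atTop := by
      simpa [one_div] using (tendsto_inv_nhdsGT_zero (𝕜 := ℝ))
    exact Real.tendsto_log_atTop.comp (Real.tendsto_log_atTop.comp h1)
  have hg : Tendsto (fun ε : ℝ => (Ec * (1 + Real.log 3) + Ec * ℓ ε)/(ℓ ε - c)^p)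
      (𝓝[>] (0:ℝ)) (𝓝 0) := by
    have hφ := aux_tendsto p c (Ec * (1 + Real.log 3)) Ec hp₁
      (by
        have h3 : (0:ℝ) ≤ Real.log 3 := Real.log_nonneg (by norm_num)
        nlinarith) hEc0
    exact hφ.comp hℓtop
  have hev : ∀ᶠ ε in 𝓝[>] (0:ℝ), ε < ε0 ∧ c + 1 ≤ ℓ ε := by
    have h1 : ∀ᶠ ε in 𝓝[>] (0:ℝ), ε < ε0 := by
      have : Set.Ioo (0:ℝ) ε0 ∈ 𝓝[>] (0:ℝ) := Ioo_mem_nhdsGT_of_mem ⟨le_refl _, hε0pos⟩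
      filter_upwards [this] with ε hε using hε.2
    exact h1.and (hℓtop.eventually_ge_atTop (c+1))
  apply squeeze_zero' ?_ ?_ hg
  · filter_upwards [hev, self_mem_nhdsWithin] with ε hε hε0'
    obtain ⟨hεlt, hℓge⟩ := hε
    have hεpos : 0 < ε := hε0'
    have hIpos : 0 < (∫ t in Set.Ioo ε ε0, 1 / (t * Real.log (1 / t)) ^ ((n : ℝ) / p)) := by
      have := hIbound ε hεpos hεlt; linarith
    have hIp : 0 < (∫ t in Set.Ioo ε ε0, 1 / (t * Real.log (1 / t)) ^ ((n : ℝ) / p))^p :=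
      Real.rpow_pos_of_pos hIpos p
    exact div_nonneg (hFnonneg ε hεpos hεlt) hIp.le
  · filter_upwards [hev, self_mem_nhdsWithin] with ε hε hε0'
    obtain ⟨hεlt, hℓge⟩ := hε
    have hεpos : 0 < ε := hε0'
    set Iv : ℝ := ∫ t in Set.Ioo ε ε0, 1 / (t * Real.log (1 / t)) ^ ((n : ℝ) / p) with hIvdef
    have hI1 : ℓ ε - c ≤ Iv := hIbound ε hεpos hεlt
    have hℓc1 : 1 ≤ ℓ ε - c := by linarith
    have hIpos : 0 < Iv := by linarith
    have hrp : (ℓ ε - c)^p ≤ Iv^p := Real.rpow_le_rpow (by linarith) hI1 (by linarith)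
    have hrppos : 0 < (ℓ ε - c)^p := Real.rpow_pos_of_pos (by linarith) p
    calc (∫ x in {x | dist x x0 ∈ Set.Ioo ε ε0},
          Q x / (dist x x0 * Real.log (1 / dist x x0)) ^ n) / Iv^p
        ≤ (∫ x in {x | dist x x0 ∈ Set.Ioo ε ε0},
          Q x / (dist x x0 * Real.log (1 / dist x x0)) ^ n) / (ℓ ε - c)^p := by
          apply div_le_div_of_nonneg_left (hFnonneg ε hεpos hεlt) hrppos hrp
      _ ≤ (Ec * (1 + Real.log 3) + Ec * ℓ ε)/(ℓ ε - c)^p :=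
          div_le_div_of_nonneg_right (hFbound ε hεpos hεlt) hrppos.le
end

section
/- Let n ≥ 2, let p ∈ [n−1, n) be a real number, let x0 ∈ ℝⁿ, let ε0 > 0, let s ≥ n/(n−p), and let Q : ℝⁿ → [0, ∞) be a nonnegative measurable function with Q ∈ L^s(B(x0, ε0)). Then lim_{ε → 0⁺} (log(ε0/ε))^{−p} · ∫_{ε < |x−x0| < ε0} Q(x) · |x−x0|^{−p} dx = 0; that is, ∫_{ε < |x−x0| < ε0} Q(x)·|x−x0|^{−p} dx = o( (∫_ε^{ε0} dt/t)^p ) as ε → 0⁺. -/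
open MeasureTheory Metric Filter Topology
open scoped ENNReal NNReal

lemma annulus_measurable (n : ℕ) (x0 : EuclideanSpace ℝ (Fin n)) (ε ε0 : ℝ) :
    MeasurableSet {x : EuclideanSpace ℝ (Fin n) | dist x x0 ∈ Set.Ioo ε ε0} :=
  (measurable_dist.comp (measurable_id.prodMk measurable_const)) measurableSet_Ioo

lemma polar_aux (n : ℕ) (hn : 2 ≤ n) (x0 : EuclideanSpace ℝ (Fin n)) {ε ε0 : ℝ}
    (hε : 0 < ε) (hεε0 : ε < ε0) :
    ∫ x in {x | dist x x0 ∈ Set.Ioo ε ε0}, (dist x x0) ^ (-(n:ℝ)) =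
      ((n : ℝ) * (volume (ball (0 : EuclideanSpace ℝ (Fin n)) 1)).toReal) * Real.log (ε0/ε) := by
  haveI : NeZero n := ⟨by omega⟩
  haveI : Nontrivial (EuclideanSpace ℝ (Fin n)) := by
    have : 0 < Module.finrank ℝ (EuclideanSpace ℝ (Fin n)) := by
      rw [finrank_euclideanSpace_fin]; omega
    exact Module.nontrivial_of_finrank_pos this
  set f : ℝ → ℝ := (Set.Ioo ε ε0).indicator (fun y => y ^ (-(n:ℝ))) with hf
  have key : ∫ x : EuclideanSpace ℝ (Fin n), f (‖x - x0‖) =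
      Module.finrank ℝ (EuclideanSpace ℝ (Fin n)) •
        (volume (ball (0 : EuclideanSpace ℝ (Fin n)) 1)).toReal •
        ∫ y in Set.Ioi (0:ℝ), y ^ (Module.finrank ℝ (EuclideanSpace ℝ (Fin n)) - 1) • f y := by
    rw [integral_sub_right_eq_self (fun x : EuclideanSpace ℝ (Fin n) => f (‖x‖)) x0]
    exact integral_fun_norm_addHaar volume f
  have h1 : ∫ x : EuclideanSpace ℝ (Fin n), f (‖x - x0‖) =
      ∫ x in {x | dist x x0 ∈ Set.Ioo ε ε0}, (dist x x0) ^ (-(n:ℝ)) := by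
    rw [← integral_indicator (annulus_measurable n x0 ε ε0)]
    congr 1 with x
  have h2 : ∫ y in Set.Ioi (0:ℝ), y ^ (Module.finrank ℝ (EuclideanSpace ℝ (Fin n)) - 1) • f y =
      Real.log (ε0 / ε) := by
    rw [finrank_euclideanSpace_fin]
    have : ∀ y : ℝ, y ^ (n - 1) • f y =
        (Set.Ioo ε ε0).indicator (fun y => y ^ (n-1) * y ^ (-(n:ℝ))) y := by
      intro y
      by_cases hy : y ∈ Set.Ioo ε ε0 <;>
        simp [hf, Set.indicator_of_mem, Set.indicator_of_notMem, hy, smul_eq_mul]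
    simp_rw [this]
    rw [setIntegral_indicator measurableSet_Ioo]
    have hinter : Set.Ioi (0:ℝ) ∩ Set.Ioo ε ε0 = Set.Ioo ε ε0 := by
      ext y; simp only [Set.mem_inter_iff, Set.mem_Ioi, Set.mem_Ioo]
      exact ⟨fun h => h.2, fun h => ⟨hε.trans h.1, h⟩⟩
    rw [hinter]
    have heq : ∀ y ∈ Set.Ioo ε ε0, y ^ (n - 1) * y ^ (-(n:ℝ)) = y⁻¹ := by
      intro y hy
      have hy0 : 0 < y := hε.trans hy.1
      rw [← Real.rpow_natCast y (n-1), ← Real.rpow_add hy0]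
      have : ((n : ℕ) - 1 : ℕ) = ((n:ℝ) - 1 : ℝ) := by
        push_cast [Nat.cast_sub (by omega : 1 ≤ n)]; ring
      rw [this]
      rw [show (n:ℝ) - 1 + -(n:ℝ) = -1 by ring, Real.rpow_neg_one]
    rw [setIntegral_congr_fun measurableSet_Ioo heq]
    rw [← MeasureTheory.integral_Ioc_eq_integral_Ioo, ← intervalIntegral.integral_of_le hεε0.le]
    exact integral_inv (by
      rw [Set.uIcc_of_le hεε0.le]
      intro h
      exact absurd (Set.mem_Icc.1 h).1 (not_le.2 hε))
  rw [← h1, key, h2, finrank_euclideanSpace_fin]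
  simp only [nsmul_eq_mul, smul_eq_mul]
  ring

lemma annulus_integrable (n : ℕ) (x0 : EuclideanSpace ℝ (Fin n)) {ε ε0 r : ℝ}
    (hε : 0 < ε) (hr : r ≤ 0) :
    IntegrableOn (fun x => dist x x0 ^ r) {x | dist x x0 ∈ Set.Ioo ε ε0} volume := by
  have hA := annulus_measurable n x0 ε ε0
  have hsub : {x : EuclideanSpace ℝ (Fin n) | dist x x0 ∈ Set.Ioo ε ε0} ⊆ ball x0 ε0 :=
    fun x hx => mem_ball.2 hx.2
  have hfin : volume {x : EuclideanSpace ℝ (Fin n) | dist x x0 ∈ Set.Ioo ε ε0} ≠ ⊤ :=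
    ((measure_mono hsub).trans_lt measure_ball_lt_top).ne
  apply Measure.integrableOn_of_bounded hfin
  · have md : Measurable (fun x : EuclideanSpace ℝ (Fin n) => dist x x0 ^ r) := by fun_prop
    exact md.aestronglyMeasurable
  · refine (ae_restrict_mem hA).mono fun x hx => ?_
    rw [Real.norm_eq_abs, abs_of_nonneg (Real.rpow_nonneg dist_nonneg r)]
    exact Real.rpow_le_rpow_of_nonpos hε hx.1.le hr

/-- For `n ≥ 2`, `p ∈ [n−1, n)`, `x0 ∈ ℝⁿ`, `ε0 > 0`, `s ≥ n/(n−p)`,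
and a nonnegative measurable `Q ∈ L^s(B(x0, ε0))`, one has
`(log(ε0/ε))^{−p} · ∫_{ε < |x−x0| < ε0} Q(x)·|x−x0|^{−p} dx → 0` as `ε → 0⁺`. -/
theorem tendsto_annulus_integral_div_log_pow (n : ℕ) (hn : 2 ≤ n) (p : ℝ)
    (hp₁ : (n : ℝ) - 1 ≤ p) (hp₂ : p < (n : ℝ))
    (x0 : EuclideanSpace ℝ (Fin n)) (ε0 : ℝ) (hε0 : 0 < ε0)
    (s : ℝ) (hs : (n : ℝ) / ((n : ℝ) - p) ≤ s)
    (Q : EuclideanSpace ℝ (Fin n) → ℝ) (hQ0 : ∀ x, 0 ≤ Q x) (hQm : Measurable Q)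
    (hQLs : MemLp Q (ENNReal.ofReal s) (volume.restrict (ball x0 ε0))) :
    Tendsto (fun ε : ℝ =>
        Real.log (ε0 / ε) ^ (-p) *
          ∫ x in {x | dist x x0 ∈ Set.Ioo ε ε0}, Q x * dist x x0 ^ (-p))
      (𝓝[>] (0 : ℝ)) (𝓝 0) := by
  have hn2 : (2:ℝ) ≤ (n:ℝ) := by exact_mod_cast hn
  have hp1 : 1 ≤ p := by linarith
  have hp0 : 0 < p := by linarith
  have hnp : 0 < (n:ℝ) - p := by linarith
  have hs1 : 1 < s := by
    refine lt_of_lt_of_le ?_ hs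
    rw [lt_div_iff₀ hnp]; linarith
  have hs0 : 0 < s := by linarith
  have hs1' : 0 < s - 1 := by linarith
  set q := Real.conjExponent s with hqdef
  have hq : s.HolderConjugate q := Real.HolderConjugate.conjExponent hs1
  have hq1 : 1 < q := hq.symm.lt
  have hq0 : 0 < q := by linarith
  have hqinv : 1/q < 1 := by rw [div_lt_one hq0]; exact hq1
  have hsn : (n:ℝ) ≤ s * ((n:ℝ) - p) := (div_le_iff₀ hnp).1 hs
  have hqe : q = s / (s - 1) := hq.conjugate_eq
  have hpq : p * q ≤ (n:ℝ) := by
    rw [hqe, ← mul_div_assoc, div_le_iff₀ hs1']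
    nlinarith
  set c : ℝ := (n : ℝ) * (volume (ball (0 : EuclideanSpace ℝ (Fin n)) 1)).toReal with hc
  have hc0 : 0 ≤ c := mul_nonneg (Nat.cast_nonneg n) ENNReal.toReal_nonneg
  set D : ℝ := ε0 ^ ((n:ℝ) - p * q) * c with hD
  have hD0 : 0 ≤ D := mul_nonneg (Real.rpow_nonneg hε0.le _) hc0
  set K : ℝ≥0∞ := ∫⁻ x in ball x0 ε0, (ENNReal.ofReal (Q x)) ^ s with hK
  have hKfin : K ≠ ⊤ := by
    have h1 := hQLs.2
    rw [eLpNorm_eq_lintegral_rpow_enorm_toReal (by simp [ENNReal.ofReal_eq_zero]; linarith)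
      ENNReal.ofReal_ne_top, ENNReal.toReal_ofReal hs0.le] at h1
    have h2 : ∀ x : EuclideanSpace ℝ (Fin n), ‖Q x‖ₑ = ENNReal.ofReal (Q x) :=
      fun x => Real.enorm_eq_ofReal (hQ0 x)
    simp_rw [h2] at h1
    have := (ENNReal.rpow_lt_top_iff_of_pos (by positivity : (0:ℝ) < 1/s)).1 h1
    exact this.ne
  set C : ℝ := (K ^ (1/s)).toReal * D ^ (1/q) with hCdef
  have hmd : Measurable (fun x : EuclideanSpace ℝ (Fin n) => dist x x0) :=
    (continuous_id.dist continuous_const).measurable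
  -- main quantitative bound on (0, ε0)
  have bound : ∀ ε ∈ Set.Ioo (0:ℝ) ε0,
      ∫ x in {x | dist x x0 ∈ Set.Ioo ε ε0}, Q x * dist x x0 ^ (-p) ≤
        (K ^ (1/s)).toReal * (D * Real.log (ε0/ε)) ^ (1/q) := by
    intro ε hεm
    obtain ⟨hε', hεlt⟩ := hεm
    set A := {x : EuclideanSpace ℝ (Fin n) | dist x x0 ∈ Set.Ioo ε ε0} with hAdef
    have hA : MeasurableSet A := annulus_measurable n x0 ε ε0
    have hL : 0 < Real.log (ε0/ε) := Real.log_pos (by rw [lt_div_iff₀ hε']; linarith)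
    have hInt : ∫ x in A, Q x * dist x x0 ^ (-p) =
        (∫⁻ x in A, ENNReal.ofReal (Q x) * ENNReal.ofReal (dist x x0 ^ (-p))).toReal := by
      rw [integral_eq_lintegral_of_nonneg_ae
        (Eventually.of_forall fun x => mul_nonneg (hQ0 x) (Real.rpow_nonneg dist_nonneg _))
        ((hQm.mul (show Measurable fun x : EuclideanSpace ℝ (Fin n) => dist x x0 ^ (-p)
          by fun_prop)).aestronglyMeasurable)]
      congr 1
      apply lintegral_congr
      intro x
      rw [ENNReal.ofReal_mul (hQ0 x)]
    have hHolder := ENNReal.lintegral_mul_le_Lp_mul_Lq (volume.restrict A) hq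
      (hQm.ennreal_ofReal.aemeasurable)
      ((show Measurable fun x : EuclideanSpace ℝ (Fin n) =>
        ENNReal.ofReal (dist x x0 ^ (-p)) by fun_prop).aemeasurable)
    have hT1 : (∫⁻ x in A, (ENNReal.ofReal (Q x)) ^ s) ^ (1/s) ≤ K ^ (1/s) := by
      apply ENNReal.rpow_le_rpow _ (by positivity)
      exact lintegral_mono' (Measure.restrict_mono (fun x hx => mem_ball.2 hx.2) le_rfl) le_rfl
    have hT2 : (∫⁻ x in A, (ENNReal.ofReal (dist x x0 ^ (-p))) ^ q) ≤
        ENNReal.ofReal (D * Real.log (ε0/ε)) := by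
      have step1 : ∀ᵐ x ∂volume.restrict A, (ENNReal.ofReal (dist x x0 ^ (-p))) ^ q ≤
          ENNReal.ofReal (ε0 ^ ((n:ℝ) - p*q) * dist x x0 ^ (-(n:ℝ))) := by
        filter_upwards [ae_restrict_mem hA] with x hx
        have hd0 : 0 < dist x x0 := lt_trans hε' hx.1
        rw [ENNReal.ofReal_rpow_of_nonneg (Real.rpow_nonneg dist_nonneg _) hq0.le]
        apply ENNReal.ofReal_le_ofReal
        rw [← Real.rpow_mul dist_nonneg]
        have hsplit : dist x x0 ^ (-p*q) =
            dist x x0 ^ ((n:ℝ) - p*q) * dist x x0 ^ (-(n:ℝ)) := by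
          rw [← Real.rpow_add hd0]; ring_nf
        rw [hsplit]
        apply mul_le_mul_of_nonneg_right _ (Real.rpow_nonneg dist_nonneg _)
        exact Real.rpow_le_rpow dist_nonneg hx.2.le (by linarith)
      have hint : Integrable (fun x : EuclideanSpace ℝ (Fin n) =>
          ε0 ^ ((n:ℝ) - p*q) * dist x x0 ^ (-(n:ℝ))) (volume.restrict A) :=
        (annulus_integrable n x0 hε' (by simp [Nat.cast_nonneg] : -(n:ℝ) ≤ 0)).const_mul _
      calc (∫⁻ x in A, (ENNReal.ofReal (dist x x0 ^ (-p))) ^ q)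
          ≤ ∫⁻ x in A, ENNReal.ofReal (ε0 ^ ((n:ℝ) - p*q) * dist x x0 ^ (-(n:ℝ))) :=
            lintegral_mono_ae step1
        _ = ENNReal.ofReal (∫ x in A, ε0 ^ ((n:ℝ) - p*q) * dist x x0 ^ (-(n:ℝ))) :=
            (ofReal_integral_eq_lintegral_ofReal hint
              (Eventually.of_forall fun x =>
                mul_nonneg (Real.rpow_nonneg hε0.le _) (Real.rpow_nonneg dist_nonneg _))).symm
        _ = ENNReal.ofReal (D * Real.log (ε0/ε)) := by
            rw [integral_const_mul, polar_aux n hn x0 hε' hεlt]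
            congr 1
            rw [hD]; ring
    have hchain : (∫⁻ x in A, ENNReal.ofReal (Q x) * ENNReal.ofReal (dist x x0 ^ (-p))) ≤
        K ^ (1/s) * (ENNReal.ofReal (D * Real.log (ε0/ε))) ^ (1/q) := by
      refine le_trans ?_ (mul_le_mul' hT1 (ENNReal.rpow_le_rpow hT2 (by positivity)))
      simpa using hHolder
    have hRfin : K ^ (1/s) * (ENNReal.ofReal (D * Real.log (ε0/ε))) ^ (1/q) ≠ ⊤ :=
      ENNReal.mul_ne_top (ENNReal.rpow_ne_top_of_nonneg (by positivity) hKfin)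
        (ENNReal.rpow_ne_top_of_nonneg (by positivity) ENNReal.ofReal_ne_top)
    rw [hInt]
    calc (∫⁻ x in A, ENNReal.ofReal (Q x) * ENNReal.ofReal (dist x x0 ^ (-p))).toReal
        ≤ (K ^ (1/s) * (ENNReal.ofReal (D * Real.log (ε0/ε))) ^ (1/q)).toReal :=
          ENNReal.toReal_mono hRfin hchain
      _ = (K ^ (1/s)).toReal * (D * Real.log (ε0/ε)) ^ (1/q) := by
          rw [ENNReal.toReal_mul, ← ENNReal.toReal_rpow, ← ENNReal.toReal_rpow,
            ENNReal.toReal_ofReal (mul_nonneg hD0 hL.le)]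
  -- the comparison function tends to zero
  have hLtend : Tendsto (fun ε : ℝ => Real.log (ε0/ε)) (𝓝[>] 0) atTop := by
    apply Real.tendsto_log_atTop.comp
    have h1 : Tendsto (fun ε : ℝ => ε0 * ε⁻¹) (𝓝[>] 0) atTop :=
      tendsto_inv_nhdsGT_zero.const_mul_atTop hε0
    exact h1.congr (fun ε => (div_eq_mul_inv ε0 ε).symm)
  have hgtend : Tendsto (fun ε : ℝ => C * Real.log (ε0/ε) ^ (1/q - p)) (𝓝[>] 0) (𝓝 0) := by
    have h0 : Tendsto (fun L : ℝ => L ^ (1/q - p)) atTop (𝓝 0) := by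
      rw [show 1/q - p = -(p - 1/q) by ring]
      exact tendsto_rpow_neg_atTop (by linarith)
    have := (h0.comp hLtend).const_mul C
    simpa using this
  apply squeeze_zero' ?_ ?_ hgtend
  · filter_upwards [Ioo_mem_nhdsGT_of_mem ⟨le_refl (0:ℝ), hε0⟩] with ε hεm
    obtain ⟨hε', hεlt⟩ := hεm
    have hL : 0 < Real.log (ε0/ε) := Real.log_pos (by rw [lt_div_iff₀ hε']; linarith)
    exact mul_nonneg (Real.rpow_nonneg hL.le _)
      (setIntegral_nonneg (annulus_measurable n x0 ε ε0)
        fun x _ => mul_nonneg (hQ0 x) (Real.rpow_nonneg dist_nonneg _))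
  · filter_upwards [Ioo_mem_nhdsGT_of_mem ⟨le_refl (0:ℝ), hε0⟩] with ε hεm
    obtain ⟨hε', hεlt⟩ := hεm
    have hL : 0 < Real.log (ε0/ε) := Real.log_pos (by rw [lt_div_iff₀ hε']; linarith)
    have h1 := bound ε ⟨hε', hεlt⟩
    calc Real.log (ε0/ε) ^ (-p) * ∫ x in {x | dist x x0 ∈ Set.Ioo ε ε0}, Q x * dist x x0 ^ (-p)
        ≤ Real.log (ε0/ε) ^ (-p) *
            ((K ^ (1/s)).toReal * (D * Real.log (ε0/ε)) ^ (1/q)) :=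
          mul_le_mul_of_nonneg_left h1 (Real.rpow_nonneg hL.le _)
      _ = C * Real.log (ε0/ε) ^ (1/q - p) := by
          rw [Real.mul_rpow hD0 hL.le, hCdef, sub_eq_add_neg, Real.rpow_add hL]
          ring
end
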